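/- arXiv:math/0601352 — 5 statements merged into one kernel-verified Lean document; each statement's English description precedes it below -/
import Mathlib

section
/- For partitions μ and ν, Σ_k k·C_k(μ,ν) = (1/2)(κ(μ) + κ(ν)), where C_k(μ,ν) are the Laurent coefficients of f_{μ,ν}(q). -/
/-- A partition: a weakly decreasing sequence of natural numbers with finitely many
nonzero parts.  `parts i` is the `(i+1)`-st part (so indexing in the paper is shifted by one). -/
structure Ptn where
  parts : ℕ → ℕ
  anti : ∀ ⦃i j : ℕ⦄, i ≤ j → parts j ≤ parts i
  bnd : ℕ
  bnd_spec : ∀ i, bnd ≤ i → parts i = 0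

/-- The empty partition. -/
def zeroP : Ptn := ⟨fun _ => 0, fun _ _ _ => le_rfl, 0, fun _ _ => rfl⟩

/-- `|μ| = Σ_j μ_j`. -/
def psize (μ : Ptn) : ℕ := ∑ i ∈ Finset.range μ.bnd, μ.parts i

/-- `κ(μ) = |μ| + Σ_j μ_j (μ_j - 2 j)` (the sum over the nonzero parts, `j` being the
1-based index of the part). -/
def kappa (μ : Ptn) : ℤ :=
  (psize μ : ℤ) + ∑ i ∈ Finset.range μ.bnd, (μ.parts i : ℤ) * ((μ.parts i : ℤ) - 2 * (i + 1))

/-- The conjugate (transposed) partition: `(μ^t)_i = #{ j : μ_j ≥ i }`. -/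
def pconj (μ : Ptn) : Ptn where
  parts i := ((Finset.range μ.bnd).filter (fun j => i + 1 ≤ μ.parts j)).card
  anti := by
    intro i j hij
    apply Finset.card_le_card
    intro a ha
    simp only [Finset.mem_filter] at ha ⊢
    exact ⟨ha.1, by omega⟩
  bnd := μ.parts 0
  bnd_spec := by
    intro i hi
    rw [Finset.card_eq_zero, Finset.filter_eq_empty_iff]
    intro a _
    have := μ.anti (Nat.zero_le a)
    omega

/-- The cells of the skew Young diagram `λ/μ`, with 0-based coordinates:
`(i, j)` is a cell iff `μ_{i+1} ≤ j < λ_{i+1}`. -/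
def cellsF (lam mu : Ptn) : Finset (ℕ × ℕ) :=
  (Finset.range lam.bnd ×ˢ Finset.range (lam.parts 0)).filter
    (fun c => mu.parts c.1 ≤ c.2 ∧ c.2 < lam.parts c.1)

open scoped LaurentSeries
noncomputable section

/-- `f_μ(q) = (q/(q-1)) Σ_{i ≥ 1} (q^{μ_i - i} - q^{-i})`, as a rational function in `q = X`.
(The summands vanish for `i > bnd`, so the sum is finite.) -/
def fOne (μ : Ptn) : RatFunc ℚ :=
  (RatFunc.X / (RatFunc.X - 1)) *
    ∑ i ∈ Finset.range μ.bnd,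
      ((RatFunc.X : RatFunc ℚ) ^ ((μ.parts i : ℤ) - (i + 1)) - RatFunc.X ^ (-((i : ℤ) + 1)))

/-- `f_{μ,ν}(q) = (q - 2 + q^{-1}) f_μ(q) f_ν(q) + f_μ(q) + f_ν(q)`. -/
def fTwo (μ ν : Ptn) : RatFunc ℚ :=
  (RatFunc.X - 2 + RatFunc.X⁻¹) * fOne μ * fOne ν + fOne μ + fOne ν

/-- `C_k(μ,ν)`: the coefficient of `q^k` in the Laurent polynomial `f_{μ,ν}(q)`
(read off from the Laurent-series expansion of the rational function `f_{μ,ν}`). -/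
def Ck (μ ν : Ptn) (k : ℤ) : ℚ := ((fTwo μ ν : LaurentSeries ℚ)).coeff k
open HahnSeries Finset

-- basic Laurent series lemmas
theorem coeff_sum' {α : Type*} (s : Finset α) (F : α → LaurentSeries ℚ) (k : ℤ) :
    (∑ i ∈ s, F i).coeff k = ∑ i ∈ s, (F i).coeff k := by
  induction s using Finset.cons_induction with
  | empty => simp
  | cons a s ha ih => rw [Finset.sum_cons, HahnSeries.coeff_add, ih, Finset.sum_cons]

theorem szpow (e : ℤ) :
    (HahnSeries.single (1:ℤ) (1:ℚ) : LaurentSeries ℚ) ^ e = HahnSeries.single e 1 := by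
  obtain ⟨n⟩ | ⟨n⟩ := e
  · rw [Int.ofNat_eq_coe, zpow_natCast, HahnSeries.single_pow]; simp
  · rw [zpow_negSucc, HahnSeries.single_pow]
    simp only [nsmul_eq_mul, mul_one, one_pow]
    refine inv_eq_of_mul_eq_one_right ?_
    rw [HahnSeries.single_mul_single, Int.negSucc_eq]
    push_cast
    rw [show ((n:ℤ)+1) + -((n:ℤ)+1) = 0 by ring, mul_one]
    exact HahnSeries.single_zero_one

theorem Xz (e : ℤ) : ((RatFunc.X ^ e : RatFunc ℚ) : LaurentSeries ℚ) = HahnSeries.single e 1 := by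
  rw [map_zpow₀, RatFunc.coe_X, szpow]

theorem wsupp {α : Type*} (s : Finset α) (e : α → ℤ) (r : α → ℚ) :
    (Function.support fun k : ℤ =>
      (k:ℚ) * (∑ i ∈ s, HahnSeries.single (e i) (r i) : LaurentSeries ℚ).coeff k) ⊆
      ↑(s.image e) := by
  intro k hk
  simp only [Function.mem_support, ne_eq] at hk
  by_contra hmem
  apply hk
  rw [coeff_sum', Finset.sum_eq_zero, mul_zero]
  intro i hi
  rw [HahnSeries.coeff_single_of_ne]
  intro h
  exact hmem (by rw [h]; exact Finset.mem_coe.mpr (Finset.mem_image_of_mem e hi))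

theorem wsuppF {α : Type*} (s : Finset α) (e : α → ℤ) (r : α → ℚ) :
    (Function.support fun k : ℤ =>
      (k:ℚ) * (∑ i ∈ s, HahnSeries.single (e i) (r i) : LaurentSeries ℚ).coeff k).Finite :=
  Set.Finite.subset (s.image e).finite_toSet (wsupp s e r)

theorem wsum {α : Type*} (s : Finset α) (e : α → ℤ) (r : α → ℚ) :
    ∑ᶠ k : ℤ, (k:ℚ) * (∑ i ∈ s, HahnSeries.single (e i) (r i) : LaurentSeries ℚ).coeff k
      = ∑ i ∈ s, (e i : ℚ) * r i := by
  rw [finsum_eq_sum_of_support_subset _ (wsupp s e r)]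
  have : ∀ k ∈ s.image e,
      (k:ℚ) * (∑ i ∈ s, HahnSeries.single (e i) (r i) : LaurentSeries ℚ).coeff k
        = ∑ i ∈ s, (k:ℚ) * (HahnSeries.single (e i) (r i) : LaurentSeries ℚ).coeff k := by
    intro k _; rw [coeff_sum', Finset.mul_sum]
  rw [Finset.sum_congr rfl this, Finset.sum_comm]
  refine Finset.sum_congr rfl fun i hi => ?_
  simp only [HahnSeries.coeff_single, mul_ite, mul_zero]
  rw [Finset.sum_ite_eq' (s.image e) (e i) (fun k => (k:ℚ) * r i)]
  simp [Finset.mem_image_of_mem e hi]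

-- RatFunc identities
theorem hXsub : (RatFunc.X - 1 : RatFunc ℚ) ≠ 0 := by
  have h : (Polynomial.X - Polynomial.C (1:ℚ)) ≠ 0 := Polynomial.X_sub_C_ne_zero 1
  have := RatFunc.algebraMap_ne_zero h
  simpa using this

theorem rowkey (m i : ℕ) :
    (RatFunc.X / (RatFunc.X - 1) : RatFunc ℚ) *
      (RatFunc.X ^ ((m:ℤ) - ((i:ℤ) + 1)) - RatFunc.X ^ (-((i:ℤ) + 1)))
      = ∑ t ∈ range m, RatFunc.X ^ ((t:ℤ) - (i:ℤ)) := by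
  have hX : (RatFunc.X : RatFunc ℚ) ≠ 0 := RatFunc.X_ne_zero
  have hy : ∀ a : ℤ, (RatFunc.X : RatFunc ℚ) ^ a * RatFunc.X = RatFunc.X ^ (a + 1) :=
    fun a => (zpow_add_one₀ hX a).symm
  rw [div_mul_eq_mul_div, div_eq_iff hXsub, mul_comm RatFunc.X, sub_mul, hy, hy, Finset.sum_mul]
  have : ∀ t ∈ range m, (RatFunc.X : RatFunc ℚ) ^ ((t:ℤ) - i) * (RatFunc.X - 1)
      = RatFunc.X ^ (((t+1:ℕ):ℤ) - i) - RatFunc.X ^ ((t:ℤ) - i) := by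
    intro t _
    rw [mul_sub_one, hy]
    congr 2
    push_cast; ring
  rw [Finset.sum_congr rfl this, Finset.sum_range_sub (fun t => (RatFunc.X:RatFunc ℚ) ^ ((t:ℤ) - i))]
  congr 2 <;> push_cast <;> ring

theorem fOne_eq (μ : Ptn) :
    fOne μ = ∑ i ∈ range μ.bnd, ∑ t ∈ range (μ.parts i), RatFunc.X ^ ((t:ℤ) - (i:ℤ)) := by
  unfold fOne
  rw [Finset.mul_sum]
  exact Finset.sum_congr rfl fun i _ => rowkey (μ.parts i) i


def sg (μ : Ptn) : Finset ((_ : ℕ) × ℕ) := (range μ.bnd).sigma fun i => range (μ.parts i)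

theorem fOne_coe (μ : Ptn) :
    ((fOne μ : RatFunc ℚ) : LaurentSeries ℚ)
      = ∑ c ∈ sg μ, HahnSeries.single ((c.2:ℤ) - (c.1:ℤ)) (1:ℚ) := by
  rw [fOne_eq, map_sum, sg, Finset.sum_sigma]
  refine Finset.sum_congr rfl fun i _ => ?_
  rw [map_sum]
  exact Finset.sum_congr rfl fun t _ => by rw [Xz]

theorem factor_coe :
    ((RatFunc.X - 2 + RatFunc.X⁻¹ : RatFunc ℚ) : LaurentSeries ℚ)
      = HahnSeries.single (1:ℤ) (1:ℚ) + HahnSeries.single (0:ℤ) (-2:ℚ)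
        + HahnSeries.single (-1:ℤ) (1:ℚ) := by
  have h2 : ((2 : RatFunc ℚ) : LaurentSeries ℚ) = HahnSeries.single (0:ℤ) (2:ℚ) := by
    have : ((RatFunc.C (2:ℚ) : RatFunc ℚ) : LaurentSeries ℚ) = HahnSeries.C (2:ℚ) :=
      by simp; rw [show (2:RatFunc ℚ) = 1 + 1 by norm_num, map_add, map_one, one_add_one_eq_two]
    rwa [map_ofNat, HahnSeries.C_apply] at this
  have hinv : ((RatFunc.X⁻¹ : RatFunc ℚ) : LaurentSeries ℚ) = HahnSeries.single (-1:ℤ) (1:ℚ) := by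
    rw [← zpow_neg_one, Xz]
  rw [map_add, map_sub, RatFunc.coe_X, h2, hinv]
  have : HahnSeries.single (0:ℤ) (-2:ℚ) = -HahnSeries.single (0:ℤ) (2:ℚ) := by
    ext k
    simp [HahnSeries.coeff_single]
  rw [this]
  abel

def EE (p : ((Σ _ : ℕ, ℕ) × (Σ _ : ℕ, ℕ)) × ℕ) : ℤ :=
  ((p.1.1.2:ℤ) - p.1.1.1) + ((p.1.2.2:ℤ) - p.1.2.1) + 1 - p.2
def RR (p : ((Σ _ : ℕ, ℕ) × (Σ _ : ℕ, ℕ)) × ℕ) : ℚ := if p.2 = 1 then -2 else 1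

theorem prod_coe (μ ν : Ptn) :
    (((RatFunc.X - 2 + RatFunc.X⁻¹) * fOne μ * fOne ν : RatFunc ℚ) : LaurentSeries ℚ)
      = ∑ p ∈ (sg μ ×ˢ sg ν) ×ˢ range 3, HahnSeries.single (EE p) (RR p) := by
  rw [map_mul, map_mul, factor_coe, fOne_coe, fOne_coe]
  rw [Finset.sum_product, Finset.sum_product]
  rw [mul_assoc, Finset.sum_mul_sum]
  rw [Finset.mul_sum]
  refine Finset.sum_congr rfl fun a ha => ?_
  rw [Finset.mul_sum]
  refine Finset.sum_congr rfl fun b hb => ?_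
  rw [add_mul, add_mul, HahnSeries.single_mul_single, HahnSeries.single_mul_single,
    HahnSeries.single_mul_single, HahnSeries.single_mul_single]
  rw [Finset.sum_range_succ, Finset.sum_range_succ, Finset.sum_range_succ,
    Finset.sum_range_zero]
  simp only [EE, RR]
  norm_num
  congr 3 <;> ring

theorem gauss (m : ℕ) : (∑ t ∈ range m, (t:ℚ)) * 2 = m * (m - 1) := by
  induction m with
  | zero => simp
  | succ n ih => rw [Finset.sum_range_succ, add_mul, ih]; push_cast; ring

theorem contSum (μ : Ptn) :
    ∑ c ∈ sg μ, (((c.2:ℤ) - (c.1:ℤ) : ℤ) : ℚ) * 1 = (kappa μ : ℚ) / 2 := by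
  rw [eq_div_iff (two_ne_zero)]
  rw [sg, Finset.sum_sigma, Finset.sum_mul]
  have : (kappa μ : ℚ)
      = ∑ i ∈ range μ.bnd,
          ((μ.parts i : ℚ) + (μ.parts i : ℚ) * ((μ.parts i : ℚ) - 2 * ((i:ℚ) + 1))) := by
    rw [kappa, psize]
    push_cast
    rw [← Finset.sum_add_distrib]
  rw [this]
  refine Finset.sum_congr rfl fun i _ => ?_
  have expand : (∑ c ∈ range (μ.parts i), (((c:ℤ) - (i:ℤ) : ℤ) : ℚ) * 1) * 2
      = (∑ t ∈ range (μ.parts i), (t:ℚ)) * 2 - 2 * (μ.parts i) * i := by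
    push_cast
    simp only [mul_one]
    rw [Finset.sum_sub_distrib]
    simp [Finset.sum_const]
    ring
  rw [expand, gauss]
  ring

theorem zeroSum (μ ν : Ptn) :
    ∑ p ∈ (sg μ ×ˢ sg ν) ×ˢ range 3, (EE p : ℚ) * RR p = 0 := by
  rw [Finset.sum_product]
  refine Finset.sum_eq_zero fun q _ => ?_
  rw [Finset.sum_range_succ, Finset.sum_range_succ, Finset.sum_range_succ, Finset.sum_range_zero]
  simp only [EE, RR]
  norm_num
  ring

/-- `Σ_k k·C_k(μ,ν) = (1/2)(κ(μ) + κ(ν))`. -/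
theorem sum_mul_Ck (μ ν : Ptn) :
    ∑ᶠ k : ℤ, (k : ℚ) * Ck μ ν k = ((kappa μ : ℚ) + (kappa ν : ℚ)) / 2 := by
  have hT : (fTwo μ ν : LaurentSeries ℚ)
      = (∑ p ∈ (sg μ ×ˢ sg ν) ×ˢ range 3, HahnSeries.single (EE p) (RR p))
        + (∑ c ∈ sg μ, HahnSeries.single ((c.2:ℤ) - (c.1:ℤ)) (1:ℚ))
        + (∑ c ∈ sg ν, HahnSeries.single ((c.2:ℤ) - (c.1:ℤ)) (1:ℚ)) := by
    rw [fTwo, map_add, map_add, prod_coe, fOne_coe, fOne_coe]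
  have key : ∀ k : ℤ, (k:ℚ) * Ck μ ν k
      = (k:ℚ) * (∑ p ∈ (sg μ ×ˢ sg ν) ×ˢ range 3,
            HahnSeries.single (EE p) (RR p) : LaurentSeries ℚ).coeff k
        + (k:ℚ) * (∑ c ∈ sg μ,
            HahnSeries.single ((c.2:ℤ) - (c.1:ℤ)) (1:ℚ) : LaurentSeries ℚ).coeff k
        + (k:ℚ) * (∑ c ∈ sg ν,
            HahnSeries.single ((c.2:ℤ) - (c.1:ℤ)) (1:ℚ) : LaurentSeries ℚ).coeff k := by
    intro k
    rw [Ck, hT, HahnSeries.coeff_add, HahnSeries.coeff_add]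
    ring
  calc ∑ᶠ k : ℤ, (k : ℚ) * Ck μ ν k
      = ∑ᶠ k : ℤ, ((k:ℚ) * (∑ p ∈ (sg μ ×ˢ sg ν) ×ˢ range 3,
            HahnSeries.single (EE p) (RR p) : LaurentSeries ℚ).coeff k
        + (k:ℚ) * (∑ c ∈ sg μ,
            HahnSeries.single ((c.2:ℤ) - (c.1:ℤ)) (1:ℚ) : LaurentSeries ℚ).coeff k
        + (k:ℚ) * (∑ c ∈ sg ν,
            HahnSeries.single ((c.2:ℤ) - (c.1:ℤ)) (1:ℚ) : LaurentSeries ℚ).coeff k) := by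
        exact finsum_congr key
    _ = ((kappa μ : ℚ) + (kappa ν : ℚ)) / 2 := by
        rw [finsum_add_distrib
            (Set.Finite.subset (Set.finite_union.mpr
              ⟨wsuppF _ EE RR, wsuppF _ _ _⟩) (Function.support_add _ _))
            (wsuppF _ _ _)]
        rw [finsum_add_distrib (wsuppF _ EE RR) (wsuppF _ _ _)]
        rw [wsum, wsum, wsum, zeroSum, zero_add]
        rw [contSum, contSum]
        ring
end
end

section
/- For partitions μ and ν and any integer k, C_k(μ,ν) = C_{−k}(μ^t, ν^t), i.e. f_{μ^t, ν^t}(q) = f_{μ,ν}(q^{−1}). -/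
open scoped LaurentSeries
noncomputable section

namespace CkConjAux

lemma hx1 : (RatFunc.X : RatFunc ℚ) - 1 ≠ 0 := by
  intro h
  have h2 : ((RatFunc.X - 1 : RatFunc ℚ) : LaurentSeries ℚ).coeff 1 = 0 := by rw [h]; simp
  rw [map_sub, RatFunc.coe_X, HahnSeries.coeff_sub] at h2
  simp [HahnSeries.coeff_one] at h2

lemma coeA_zpow (n : ℤ) :
    (((RatFunc.X : RatFunc ℚ) ^ n : RatFunc ℚ) : LaurentSeries ℚ) = HahnSeries.single n (1:ℚ) := by
  rw [map_zpow₀, RatFunc.coe_X, ← RatFunc.single_zpow]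

lemma coeff_sum {α : Type*} (s : Finset α) (f : α → LaurentSeries ℚ) (k : ℤ) :
    (∑ a ∈ s, f a).coeff k = ∑ a ∈ s, (f a).coeff k :=
  map_sum (HahnSeries.coeff.addMonoidHom k) f s

lemma row (m i : ℕ) :
    (RatFunc.X / (RatFunc.X - 1) : RatFunc ℚ) *
      ((RatFunc.X : RatFunc ℚ) ^ ((m : ℤ) - ((i : ℤ) + 1)) - RatFunc.X ^ (-((i : ℤ) + 1))) =
    ∑ j ∈ Finset.range m, (RatFunc.X : RatFunc ℚ) ^ ((j : ℤ) - (i : ℤ)) := by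
  have hx : (RatFunc.X : RatFunc ℚ) ≠ 0 := RatFunc.X_ne_zero
  rw [div_mul_eq_mul_div, eq_comm, eq_div_iff hx1]
  have key : ∀ j : ℕ, (RatFunc.X : RatFunc ℚ) ^ ((j : ℤ) - (i : ℤ))
      = RatFunc.X ^ (-(i : ℤ)) * RatFunc.X ^ j := by
    intro j
    rw [sub_eq_add_neg, add_comm, zpow_add₀ hx, zpow_natCast]
  simp only [key]
  rw [← Finset.mul_sum, mul_assoc, geom_sum_mul]
  have hmul : ∀ a : ℤ, (RatFunc.X : RatFunc ℚ) * RatFunc.X ^ a = RatFunc.X ^ (a + 1) := by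
    intro a; rw [zpow_add₀ hx, zpow_one, mul_comm]
  rw [mul_sub, mul_sub, hmul, hmul, mul_one,
    show ((RatFunc.X : RatFunc ℚ) ^ (m : ℕ)) = RatFunc.X ^ (m : ℤ) from (zpow_natCast _ m).symm,
    ← zpow_add₀ hx]
  rw [show (-(i:ℤ) + m) = ((m:ℤ) - ((i:ℤ)+1) + 1) from by ring]
  rw [show (-(i:ℤ)) = (-((i:ℤ)+1) + 1) from by ring]

lemma mem_cells (μ : Ptn) (c : ℕ × ℕ) : c ∈ cellsF μ zeroP ↔ c.2 < μ.parts c.1 := by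
  rw [cellsF, Finset.mem_filter]
  simp only [zeroP, Finset.mem_product, Finset.mem_range]
  constructor
  · tauto
  · intro h
    refine ⟨⟨?_, lt_of_lt_of_le h (μ.anti (Nat.zero_le _))⟩, Nat.zero_le _, h⟩
    by_contra hb
    push_neg at hb
    have := μ.bnd_spec _ hb
    omega

lemma sum_cells (μ : Ptn) {M : Type*} [AddCommMonoid M] (f : ℕ → ℕ → M) :
    ∑ c ∈ cellsF μ zeroP, f c.1 c.2
      = ∑ i ∈ Finset.range μ.bnd, ∑ j ∈ Finset.range (μ.parts i), f i j := by
  have hE : cellsF μ zeroP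
      = (Finset.range μ.bnd ×ˢ Finset.range (μ.parts 0)).filter (fun c => c.2 < μ.parts c.1) := by
    ext c
    rw [mem_cells]
    simp only [Finset.mem_filter, Finset.mem_product, Finset.mem_range]
    constructor
    · intro h
      refine ⟨⟨?_, lt_of_lt_of_le h (μ.anti (Nat.zero_le _))⟩, h⟩
      by_contra hb
      push_neg at hb
      have := μ.bnd_spec _ hb
      omega
    · tauto
  rw [hE, Finset.sum_filter, Finset.sum_product]
  refine Finset.sum_congr rfl fun i _ => ?_
  rw [← Finset.sum_filter]
  congr 1
  ext j
  simp only [Finset.mem_filter, Finset.mem_range]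
  constructor
  · tauto
  · intro h
    exact ⟨lt_of_lt_of_le h (μ.anti (Nat.zero_le i)), h⟩

lemma conj_lt (μ : Ptn) (i j : ℕ) : j < (pconj μ).parts i ↔ i < μ.parts j := by
  show j < ((Finset.range μ.bnd).filter (fun l => i + 1 ≤ μ.parts l)).card ↔ _
  constructor
  · intro h
    by_contra hc
    push_neg at hc
    have hsub : (Finset.range μ.bnd).filter (fun l => i + 1 ≤ μ.parts l) ⊆ Finset.range j := by
      intro l hl
      simp only [Finset.mem_filter, Finset.mem_range] at hl ⊢
      by_contra hlj
      push_neg at hlj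
      have := μ.anti hlj
      omega
    have := Finset.card_le_card hsub
    simp only [Finset.card_range] at this
    omega
  · intro h
    have hsub : Finset.range (j + 1) ⊆ (Finset.range μ.bnd).filter (fun l => i + 1 ≤ μ.parts l) := by
      intro l hl
      simp only [Finset.mem_range] at hl
      have h1 : μ.parts j ≤ μ.parts l := μ.anti (by omega)
      have h2 : l < μ.bnd := by
        by_contra hb
        push_neg at hb
        have := μ.bnd_spec l hb
        omega
      simp only [Finset.mem_filter, Finset.mem_range]
      exact ⟨h2, by omega⟩
    have := Finset.card_le_card hsub
    simp only [Finset.card_range] at this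
    omega

lemma cells_conj (μ : Ptn) :
    cellsF (pconj μ) zeroP = (cellsF μ zeroP).map (Equiv.prodComm ℕ ℕ).toEmbedding := by
  ext c
  simp only [Finset.mem_map, Equiv.coe_toEmbedding, Equiv.prodComm_apply]
  rw [mem_cells]
  constructor
  · intro h
    refine ⟨(c.2, c.1), ?_, by simp⟩
    rw [mem_cells]
    exact (conj_lt μ c.1 c.2).mp h
  · rintro ⟨a, ha, rfl⟩
    rw [mem_cells] at ha
    exact (conj_lt μ a.2 a.1).mpr ha

lemma fOne_eq (μ : Ptn) :
    fOne μ = ∑ c ∈ cellsF μ zeroP, (RatFunc.X : RatFunc ℚ) ^ ((c.2 : ℤ) - (c.1 : ℤ)) := by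
  rw [fOne, Finset.mul_sum,
    sum_cells μ (fun i j => (RatFunc.X : RatFunc ℚ) ^ ((j : ℤ) - (i : ℤ)))]
  exact Finset.sum_congr rfl fun i _ => row (μ.parts i) i

lemma fOne_conj (μ : Ptn) :
    fOne (pconj μ) = ∑ c ∈ cellsF μ zeroP, (RatFunc.X : RatFunc ℚ) ^ ((c.1 : ℤ) - (c.2 : ℤ)) := by
  rw [fOne_eq, cells_conj, Finset.sum_map]
  simp

lemma expand {α β : Type*} (S : Finset α) (T : Finset β) (e₁ : α → ℤ) (e₂ : β → ℤ) :
    (RatFunc.X - 2 + RatFunc.X⁻¹ : RatFunc ℚ) * (∑ c ∈ S, (RatFunc.X : RatFunc ℚ) ^ e₁ c)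
        * (∑ d ∈ T, (RatFunc.X : RatFunc ℚ) ^ e₂ d)
      + (∑ c ∈ S, (RatFunc.X : RatFunc ℚ) ^ e₁ c) + (∑ d ∈ T, (RatFunc.X : RatFunc ℚ) ^ e₂ d)
    = (∑ c ∈ S, ∑ d ∈ T,
        ((RatFunc.X : RatFunc ℚ) ^ (e₁ c + e₂ d + 1) - RatFunc.X ^ (e₁ c + e₂ d)
          - RatFunc.X ^ (e₁ c + e₂ d) + RatFunc.X ^ (e₁ c + e₂ d - 1)))
      + (∑ c ∈ S, (RatFunc.X : RatFunc ℚ) ^ e₁ c)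
      + (∑ d ∈ T, (RatFunc.X : RatFunc ℚ) ^ e₂ d) := by
  have hx : (RatFunc.X : RatFunc ℚ) ≠ 0 := RatFunc.X_ne_zero
  congr 2
  rw [mul_assoc, Finset.sum_mul_sum, Finset.mul_sum]
  refine Finset.sum_congr rfl fun c _ => ?_
  rw [Finset.mul_sum]
  refine Finset.sum_congr rfl fun d _ => ?_
  have h2 : (RatFunc.X : RatFunc ℚ) ^ (e₁ c + e₂ d) = RatFunc.X ^ e₁ c * RatFunc.X ^ e₂ d :=
    zpow_add₀ hx _ _
  have h1 : (RatFunc.X : RatFunc ℚ) ^ (e₁ c + e₂ d + 1)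
      = RatFunc.X ^ e₁ c * RatFunc.X ^ e₂ d * RatFunc.X := by
    rw [zpow_add₀ hx, h2, zpow_one]
  have h3 : (RatFunc.X : RatFunc ℚ) ^ (e₁ c + e₂ d - 1)
      = RatFunc.X ^ e₁ c * RatFunc.X ^ e₂ d * RatFunc.X⁻¹ := by
    rw [zpow_sub_one₀ hx, h2]
  rw [h1, h3, h2]
  ring

lemma Ck_formula (μ ν : Ptn) (k : ℤ) {α β : Type*} (S : Finset α) (T : Finset β)
    (e₁ : α → ℤ) (e₂ : β → ℤ)
    (h₁ : fOne μ = ∑ c ∈ S, (RatFunc.X : RatFunc ℚ) ^ e₁ c)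
    (h₂ : fOne ν = ∑ d ∈ T, (RatFunc.X : RatFunc ℚ) ^ e₂ d) :
    Ck μ ν k = (∑ c ∈ S, ∑ d ∈ T,
        ((if k = e₁ c + e₂ d + 1 then (1:ℚ) else 0) - (if k = e₁ c + e₂ d then (1:ℚ) else 0)
          - (if k = e₁ c + e₂ d then (1:ℚ) else 0) + (if k = e₁ c + e₂ d - 1 then (1:ℚ) else 0)))
      + (∑ c ∈ S, if k = e₁ c then (1:ℚ) else 0)
      + (∑ d ∈ T, if k = e₂ d then (1:ℚ) else 0) := by
  rw [Ck, fTwo, h₁, h₂, expand]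
  simp only [map_add, map_sum, map_sub, coeA_zpow, coeff_sum, HahnSeries.coeff_add,
    HahnSeries.coeff_sub, HahnSeries.coeff_single]
  congr!

end CkConjAux

/-- `C_k(μ,ν) = C_{-k}(μ^t,ν^t)` for every integer `k`
(equivalently, `f_{μ^t,ν^t}(q) = f_{μ,ν}(q^{-1})`). -/
theorem Ck_conj (μ ν : Ptn) (k : ℤ) : Ck μ ν k = Ck (pconj μ) (pconj ν) (-k) := by
  open CkConjAux in
  rw [Ck_formula μ ν k (cellsF μ zeroP) (cellsF ν zeroP)
      (fun c => (c.2 : ℤ) - (c.1 : ℤ)) (fun d => (d.2 : ℤ) - (d.1 : ℤ))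
      (fOne_eq μ) (fOne_eq ν),
    Ck_formula (pconj μ) (pconj ν) (-k) (cellsF μ zeroP) (cellsF ν zeroP)
      (fun c => (c.1 : ℤ) - (c.2 : ℤ)) (fun d => (d.1 : ℤ) - (d.2 : ℤ))
      (fOne_conj μ) (fOne_conj ν)]
  congr 1
  · congr 1
    · refine Finset.sum_congr rfl fun c _ => ?_
      refine Finset.sum_congr rfl fun d _ => ?_
      rw [if_congr (show (-k = ((c.1:ℤ) - c.2) + ((d.1:ℤ) - d.2) + 1)
            ↔ (k = ((c.2:ℤ) - c.1) + ((d.2:ℤ) - d.1) - 1) from by omega) rfl rfl,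
        if_congr (show (-k = ((c.1:ℤ) - c.2) + ((d.1:ℤ) - d.2))
            ↔ (k = ((c.2:ℤ) - c.1) + ((d.2:ℤ) - d.1)) from by omega) rfl rfl,
        if_congr (show (-k = ((c.1:ℤ) - c.2) + ((d.1:ℤ) - d.2) - 1)
            ↔ (k = ((c.2:ℤ) - c.1) + ((d.2:ℤ) - d.1) + 1) from by omega) rfl rfl]
      ring
    · refine Finset.sum_congr rfl fun c _ => ?_
      rw [if_congr (show (-k = (c.1:ℤ) - c.2) ↔ (k = (c.2:ℤ) - c.1) from by omega) rfl rfl]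
  · refine Finset.sum_congr rfl fun d _ => ?_
    rw [if_congr (show (-k = (d.1:ℤ) - d.2) ↔ (k = (d.2:ℤ) - d.1) from by omega) rfl rfl]
end
end

section
/- For partitions λ, μ, ν, the skew Schur function evaluated at the principal specialization shifted by ν satisfies s_{λ/μ}(q^{ν+ρ}) = (−1)^{|λ|−|μ|} s_{λ^t/μ^t}(q^{−ν^t−ρ}), where q^{ν+ρ} denotes the substitution x_i = q^{ν_i − i + 1/2}. -/
noncomputable section

variable {F : Type} [Field F]

/-- Complete homogeneous symmetric functions of a finite alphabet, given as a list. -/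
def hList : List F → ℕ → F
  | [], 0 => 1
  | [], _ + 1 => 0
  | a :: as, n => ∑ m ∈ Finset.range (n + 1), a ^ m * hList as (n - m)

/-- Complete homogeneous symmetric functions of the geometric alphabet
`{A, A r, A r², …}`:  `h_n = A^n / ((1-r)(1-r²)⋯(1-rⁿ))`. -/
def hGeom (A r : F) (n : ℕ) : F := A ^ n / ∏ k ∈ Finset.range n, (1 - r ^ (k + 1))

/-- Complete homogeneous symmetric functions of the principally specialized alphabet
`c·q^{ν+ρ}`, i.e. the letters `x_i = c · t^{2ν_i - 2i + 1}` (`i ≥ 1`, `t = q^{1/2}`),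
whose tail (for `i` beyond the length of `ν`) is geometric with ratio `t⁻²`. -/
def hPos (t c : F) (ν : Ptn) (n : ℕ) : F :=
  ∑ m ∈ Finset.range (n + 1),
    hList (List.ofFn fun i : Fin ν.bnd => c * t ^ (2 * (ν.parts i : ℤ) - 2 * (i : ℤ) - 1)) m *
      hGeom (c * t ^ (-(2 * (ν.bnd : ℤ)) - 1)) (t ^ (-2 : ℤ)) (n - m)

/-- Complete homogeneous symmetric functions of the alphabet `c·q^{-ν-ρ}`, i.e. the letters
`x_i = c · t^{-2ν_i + 2i - 1}` (`i ≥ 1`, `t = q^{1/2}`), with geometric tail of ratio `t²`. -/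
def hNeg (t c : F) (ν : Ptn) (n : ℕ) : F :=
  ∑ m ∈ Finset.range (n + 1),
    hList (List.ofFn fun i : Fin ν.bnd => c * t ^ (-(2 * (ν.parts i : ℤ)) + 2 * (i : ℤ) + 1)) m *
      hGeom (c * t ^ (2 * (ν.bnd : ℤ) + 1)) (t ^ (2 : ℤ)) (n - m)

/-- `h` extended to integer indices by `0` in negative degrees. -/
def hZ (h : ℕ → F) (m : ℤ) : F := if 0 ≤ m then h m.toNat else 0

/-- The skew Schur function `s_{λ/μ}` of the alphabet with complete homogeneous symmetric
functions `h`, via the Jacobi–Trudi determinant `det(h_{λ_i - μ_j - i + j})`. -/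
def sJT (h : ℕ → F) (lam mu : Ptn) : F :=
  Matrix.det (Matrix.of fun i j : Fin (lam.bnd + mu.bnd) =>
    hZ h ((lam.parts i : ℤ) - (mu.parts j : ℤ) - (i : ℤ) + (j : ℤ)))

/-- `s_{λ/μ}(q^{ν+ρ})`: the skew Schur function with the principal specialization
`x_i = q^{ν_i - i + 1/2} = t^{2ν_i - 2i + 1}` (`t = q^{1/2}`). -/
def sP (t : F) (lam mu ν : Ptn) : F := sJT (hPos t 1 ν) lam mu

/-- `s_{λ/μ}(q^{-ν-ρ})`: the specialization `x_i = q^{-ν_i + i - 1/2} = t^{-2ν_i + 2i - 1}`. -/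
def sN (t : F) (lam mu ν : Ptn) : F := sJT (hNeg t 1 ν) lam mu

/-- `s_μ(q^ρ)`: the principal specialization `x_i = q^{-i + 1/2}`. -/
def sRho (t : F) (mu : Ptn) : F := sP t mu zeroP zeroP

/-- The skew Schur function `s_{λ/μ}(x, y)` of the concatenation of two alphabets with
complete homogeneous symmetric functions `h₁` and `h₂`, via the branching rule
`s_{λ/μ}(x,y) = Σ_ξ s_{λ/ξ}(x) s_{ξ/μ}(y)` (a finite sum). -/
def dblS (h1 h2 : ℕ → F) (lam mu : Ptn) : F := ∑ᶠ ξ : Ptn, sJT h1 lam ξ * sJT h2 ξ mu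

namespace SkewPf

open Finset

/-! ### Conjugate-counting function and the Maya bijection -/

/-- number of `a < N` with `p a ≥ j+1`. -/
def cnj (p : ℕ → ℕ) (N j : ℕ) : ℕ := ((Finset.range N).filter fun a => j + 1 ≤ p a).card

lemma cnj_le (p : ℕ → ℕ) (N j : ℕ) : cnj p N j ≤ N := by
  have := Finset.card_filter_le (Finset.range N) (fun a => j + 1 ≤ p a)
  simpa [cnj] using this

lemma cnj_anti (p : ℕ → ℕ) (N : ℕ) {j j' : ℕ} (h : j ≤ j') : cnj p N j' ≤ cnj p N j := by
  apply Finset.card_le_card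
  intro a ha
  simp only [Finset.mem_filter] at ha ⊢
  exact ⟨ha.1, by omega⟩

lemma cnj_lower {p : ℕ → ℕ} (hp : ∀ ⦃i j : ℕ⦄, i ≤ j → p j ≤ p i) {N i j : ℕ}
    (hiN : i < N) (hij : j + 1 ≤ p i) : i + 1 ≤ cnj p N j := by
  have hsub : Finset.range (i + 1) ⊆ (Finset.range N).filter fun a => j + 1 ≤ p a := by
    intro a ha
    simp only [Finset.mem_range] at ha
    simp only [Finset.mem_filter, Finset.mem_range]
    exact ⟨by omega, le_trans hij (hp (by omega : a ≤ i))⟩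
  have := Finset.card_le_card hsub
  simpa [cnj] using this

lemma cnj_upper {p : ℕ → ℕ} (hp : ∀ ⦃i j : ℕ⦄, i ≤ j → p j ≤ p i) {N i j : ℕ}
    (hij : p i ≤ j) : cnj p N j ≤ i := by
  have hsub : ((Finset.range N).filter fun a => j + 1 ≤ p a) ⊆ Finset.range i := by
    intro a ha
    simp only [Finset.mem_filter, Finset.mem_range] at ha
    simp only [Finset.mem_range]
    by_contra hcon
    have : p a ≤ p i := hp (by omega : i ≤ a)
    omega
  have := Finset.card_le_card hsub
  simpa [cnj] using this

lemma cnj_stab {p : ℕ → ℕ} {N N' : ℕ} (hNN : N ≤ N') (hvan : ∀ i, N ≤ i → p i = 0) (j : ℕ) :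
    cnj p N' j = cnj p N j := by
  unfold cnj
  congr 1
  apply Finset.ext
  intro a
  simp only [Finset.mem_filter, Finset.mem_range]
  constructor
  · rintro ⟨h1, h2⟩
    refine ⟨?_, h2⟩
    by_contra hcon
    have := hvan a (by omega)
    omega
  · rintro ⟨h1, h2⟩
    exact ⟨by omega, h2⟩

lemma cnj_pconj (μ : Ptn) (j : ℕ) : (pconj μ).parts j = cnj μ.parts μ.bnd j := rfl

/-- The ℕ-valued Maya enumeration. -/
def mayaN (p : ℕ → ℕ) (N M : ℕ) : Fin N ⊕ Fin M → ℕ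
  | .inl i => p i + (N - 1 - i)
  | .inr j => j + N - cnj p N j

lemma mayaN_lt {p : ℕ → ℕ} {N M : ℕ} (hM : p 0 ≤ M)
    (hp : ∀ ⦃i j : ℕ⦄, i ≤ j → p j ≤ p i) (x : Fin N ⊕ Fin M) : mayaN p N M x < N + M := by
  cases x with
  | inl i =>
    have h1 : p i ≤ p 0 := hp (Nat.zero_le _)
    have h2 : (i : ℕ) < N := i.isLt
    simp only [mayaN]
    omega
  | inr j =>
    have h1 : (j : ℕ) < M := j.isLt
    simp only [mayaN]
    omega

lemma mayaN_inj {p : ℕ → ℕ} {N M : ℕ}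
    (hp : ∀ ⦃i j : ℕ⦄, i ≤ j → p j ≤ p i) (hN : ∀ i, N ≤ i → p i = 0) :
    ∀ x y : Fin N ⊕ Fin M, mayaN p N M x = mayaN p N M y → x = y := by
  have key : ∀ (i : Fin N) (j : Fin M), mayaN p N M (.inl i) ≠ mayaN p N M (.inr j) := by
    intro i j
    simp only [mayaN]
    have hiN : (i : ℕ) < N := i.isLt
    have hcle : cnj p N j ≤ N := cnj_le p N j
    by_cases hc : (j : ℕ) + 1 ≤ p i
    · have := cnj_lower hp hiN hc
      omega
    · have := cnj_upper hp (i := i) (N := N) (j := (j : ℕ)) (by omega)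
      omega
  intro x y hxy
  cases x with
  | inl i =>
    cases y with
    | inl i' =>
      simp only [mayaN] at hxy
      have h1 : (i : ℕ) < N := i.isLt
      have h2 : (i' : ℕ) < N := i'.isLt
      rcases lt_trichotomy (i : ℕ) (i' : ℕ) with h | h | h
      · have := hp (le_of_lt h); omega
      · congr 1; exact Fin.ext h
      · have := hp (le_of_lt h); omega
    | inr j => exact absurd hxy (key i j)
  | inr j =>
    cases y with
    | inl i => exact absurd hxy.symm (key i j)
    | inr j' =>
      simp only [mayaN] at hxy
      have h1 : (j : ℕ) < M := j.isLt
      have h2 : (j' : ℕ) < M := j'.isLt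
      have hc1 : cnj p N j ≤ N := cnj_le p N j
      have hc2 : cnj p N j' ≤ N := cnj_le p N j'
      rcases lt_trichotomy (j : ℕ) (j' : ℕ) with h | h | h
      · have := cnj_anti p N (le_of_lt h); omega
      · congr 1; exact Fin.ext h
      · have := cnj_anti p N (j := (j' : ℕ)) (j' := (j : ℕ)) (le_of_lt h); omega

/-- The Maya bijection, as an `Equiv`. -/
def mayaE (p : ℕ → ℕ) (N M : ℕ)
    (hp : ∀ ⦃i j : ℕ⦄, i ≤ j → p j ≤ p i) (hN : ∀ i, N ≤ i → p i = 0) (hM : p 0 ≤ M) :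
    (Fin N ⊕ Fin M) ≃ Fin (N + M) :=
  Equiv.ofBijective (fun x => ⟨mayaN p N M x, mayaN_lt hM hp x⟩)
    ((Fintype.bijective_iff_injective_and_card _).mpr
      ⟨fun x y hxy => mayaN_inj hp hN x y (by simpa [Fin.ext_iff] using hxy), by simp⟩)

@[simp] lemma mayaE_val (p : ℕ → ℕ) (N M : ℕ) (hp) (hN) (hM) (x : Fin N ⊕ Fin M) :
    ((mayaE p N M hp hN hM x : Fin (N + M)) : ℕ) = mayaN p N M x := rfl

end SkewPf
namespace SkewPf

open Finset Equiv

/-- The Maya permutation of `Fin (N+M)`. -/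
def mayaP (p : ℕ → ℕ) (N M : ℕ)
    (hp : ∀ ⦃i j : ℕ⦄, i ≤ j → p j ≤ p i) (hN : ∀ i, N ≤ i → p i = 0) (hM : p 0 ≤ M) :
    Equiv.Perm (Fin (N + M)) :=
  (finSumFinEquiv.symm).trans (mayaE p N M hp hN hM)

lemma zeroFun_hyp1 : ∀ ⦃i j : ℕ⦄, i ≤ j → (fun _ : ℕ => 0) j ≤ (fun _ : ℕ => 0) i :=
  fun _ _ _ => le_rfl
lemma zeroFun_hyp2 (N : ℕ) : ∀ i, N ≤ i → (fun _ : ℕ => 0) i = 0 := fun _ _ => rfl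
lemma zeroFun_hyp3 (M : ℕ) : (fun _ : ℕ => 0) 0 ≤ M := Nat.zero_le M

lemma sign_mayaP (N M : ℕ) : ∀ (n : ℕ) (p : ℕ → ℕ)
    (hp : ∀ ⦃i j : ℕ⦄, i ≤ j → p j ≤ p i) (hN : ∀ i, N ≤ i → p i = 0) (hM : p 0 ≤ M)
    (hsum : ∑ i ∈ Finset.range N, p i = n),
    Equiv.Perm.sign (mayaP p N M hp hN hM) =
      (-1) ^ n * Equiv.Perm.sign (mayaP (fun _ => 0) N M (zeroFun_hyp1) (zeroFun_hyp2 N) (zeroFun_hyp3 M)) := by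
  intro n
  induction n with
  | zero =>
    intro p hp hN hM hsum
    have hzero : p = fun _ => 0 := by
      funext i
      by_cases hi : i < N
      · exact (Finset.sum_eq_zero_iff.mp hsum) i (Finset.mem_range.mpr hi)
      · exact hN i (by omega)
    subst hzero
    simp
  | succ n ih =>
    intro p hp hN hM hsum
    -- find the last nonzero part
    set k := Nat.findGreatest (fun i => 0 < p i) N with hk_def
    have hex : ∃ i, i < N ∧ 0 < p i := by
      by_contra hcon
      push_neg at hcon
      have : ∑ i ∈ Finset.range N, p i = 0 := by
        apply Finset.sum_eq_zero
        intro i hi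
        have := hcon i (Finset.mem_range.mp hi)
        omega
      omega
    obtain ⟨i0, hi0N, hi0⟩ := hex
    have hk : 0 < p k := Nat.findGreatest_spec (P := fun i => 0 < p i) (le_of_lt hi0N) hi0
    have hkN' : k ≤ N := Nat.findGreatest_le N
    have hkN : k < N := by
      rcases lt_or_eq_of_le hkN' with h | h
      · exact h
      · exfalso; rw [h] at hk; have := hN N le_rfl; omega
    have hmax : ∀ a, k < a → p a = 0 := by
      intro a ha
      by_cases haN : a ≤ N
      · by_contra hcon
        exact (Nat.findGreatest_is_greatest ha haN) (by omega)
      · exact hN a (by omega)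
    -- the smaller partition
    set q : ℕ → ℕ := fun i => if i = k then p k - 1 else p i with hq_def
    have hq_apply : ∀ i, q i = if i = k then p k - 1 else p i := fun _ => rfl
    have hqk : q k = p k - 1 := by simp [hq_apply]
    have hqp : q 0 ≤ p 0 := by
      rw [hq_apply]
      split
      · next h => rw [← h]; omega
      · exact le_rfl
    have hq_anti : ∀ ⦃i j : ℕ⦄, i ≤ j → q j ≤ q i := by
      intro i j hij
      rw [hq_apply, hq_apply]
      rcases eq_or_ne i k with hi | hi <;> rcases eq_or_ne j k with hj | hj
      · rw [if_pos hi, if_pos hj]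
      · rw [if_pos hi, if_neg hj]
        have hj2 : p j = 0 := hmax j (by omega)
        omega
      · rw [if_neg hi, if_pos hj]
        have := hp (show i ≤ k by omega)
        omega
      · rw [if_neg hi, if_neg hj]
        exact hp hij
    have hq_N : ∀ i, N ≤ i → q i = 0 := by
      intro i hi
      rw [hq_apply, if_neg (by omega)]
      exact hN i hi
    have hq_M : q 0 ≤ M := le_trans hqp hM
    have hq_sum : ∑ i ∈ Finset.range N, q i = n := by
      have hkmem : k ∈ Finset.range N := Finset.mem_range.mpr hkN
      have h1 := Finset.add_sum_erase (Finset.range N) p hkmem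
      have h2 := Finset.add_sum_erase (Finset.range N) q hkmem
      have h3 : ∑ x ∈ (Finset.range N).erase k, q x = ∑ x ∈ (Finset.range N).erase k, p x := by
        apply Finset.sum_congr rfl
        intro x hx
        rw [hq_apply, if_neg (Finset.ne_of_mem_erase hx)]
      omega
    -- the two swapped points
    have hpk_le : p k ≤ M := le_trans (hp (Nat.zero_le k)) hM
    have hbound_a : p k + (N - 1 - k) < N + M := by omega
    have hbound_a' : p k - 1 + (N - 1 - k) < N + M := by omega
    set a : Fin (N + M) := ⟨p k + (N - 1 - k), hbound_a⟩ with ha_def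
    set a' : Fin (N + M) := ⟨p k - 1 + (N - 1 - k), hbound_a'⟩ with ha'_def
    have hane : a' ≠ a := by
      apply Fin.ne_of_val_ne
      show p k - 1 + (N - 1 - k) ≠ p k + (N - 1 - k)
      omega
    have hj0M : p k - 1 < M := by omega
    set j0 : Fin M := ⟨p k - 1, hj0M⟩ with hj0_def
    -- cnj computations
    have hcq : cnj q N (p k - 1) = k := by
      have hfe : ((Finset.range N).filter fun s => (p k - 1) + 1 ≤ q s) = Finset.range k := by
        apply Finset.ext
        intro s
        simp only [Finset.mem_filter, Finset.mem_range]
        constructor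
        · rintro ⟨h1, h2⟩
          rw [hq_apply] at h2
          by_contra hcon
          have hsk : k ≤ s := by omega
          rcases lt_or_eq_of_le hsk with h | h
          · have := hmax s h; rw [if_neg (by omega)] at h2; omega
          · rw [← h, if_pos rfl] at h2; omega
        · intro hs
          have h2 : p k ≤ q s := by
            rw [hq_apply, if_neg (by omega)]
            exact hp (le_of_lt hs)
          exact ⟨by omega, by omega⟩
      rw [cnj, hfe, Finset.card_range]
    have hcp : cnj p N (p k - 1) = k + 1 := by
      have hfe : ((Finset.range N).filter fun s => (p k - 1) + 1 ≤ p s) = Finset.range (k + 1) := by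
        apply Finset.ext
        intro s
        simp only [Finset.mem_filter, Finset.mem_range]
        constructor
        · rintro ⟨h1, h2⟩
          by_contra hcon
          have := hmax s (by omega)
          omega
        · intro hs
          have h2 : p k ≤ p s := hp (by omega)
          exact ⟨by omega, by omega⟩
      rw [cnj, hfe, Finset.card_range]
    have hcsame : ∀ j : ℕ, j ≠ p k - 1 → cnj p N j = cnj q N j := by
      intro j hj
      unfold cnj
      congr 1
      apply Finset.filter_congr
      intro s _
      rcases eq_or_ne s k with hs | hs
      · subst hs
        rw [hq_apply, if_pos rfl]
        constructor <;> intro <;> omega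
      · rw [hq_apply, if_neg hs]
    -- key swap identity
    have hkey : mayaE p N M hp hN hM =
        (mayaE q N M hq_anti hq_N hq_M).trans (Equiv.swap a' a) := by
      apply Equiv.ext
      intro x
      have hinj := (mayaE q N M hq_anti hq_N hq_M).injective
      have hvq_lk : mayaE q N M hq_anti hq_N hq_M (.inl ⟨k, hkN⟩) = a' := by
        apply Fin.ext
        show mayaN q N M (.inl ⟨k, hkN⟩) = p k - 1 + (N - 1 - k)
        simp only [mayaN, hqk]
      have hvq_rj : mayaE q N M hq_anti hq_N hq_M (.inr j0) = a := by
        apply Fin.ext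
        show mayaN q N M (.inr j0) = p k + (N - 1 - k)
        show (j0 : ℕ) + N - cnj q N j0 = p k + (N - 1 - k)
        have : (j0 : ℕ) = p k - 1 := rfl
        rw [this, hcq]
        omega
      simp only [Equiv.trans_apply]
      cases x with
      | inl i =>
        by_cases hik : (i : ℕ) = k
        · have hx : (Sum.inl i : Fin N ⊕ Fin M) = Sum.inl ⟨k, hkN⟩ := by
            congr 1; exact Fin.ext hik
          rw [hx, hvq_lk, Equiv.swap_apply_left]
          apply Fin.ext
          show mayaN p N M (.inl ⟨k, hkN⟩) = p k + (N - 1 - k)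
          simp [mayaN]
        · have hne1 : mayaE q N M hq_anti hq_N hq_M (.inl i) ≠ a' := by
            rw [← hvq_lk]
            intro hcon
            have := hinj hcon
            simp only [Sum.inl.injEq] at this
            exact hik (congrArg Fin.val this)
          have hne2 : mayaE q N M hq_anti hq_N hq_M (.inl i) ≠ a := by
            rw [← hvq_rj]
            intro hcon
            exact Sum.inl_ne_inr (hinj hcon)
          rw [Equiv.swap_apply_of_ne_of_ne hne1 hne2]
          apply Fin.ext
          show mayaN p N M (.inl i) = mayaN q N M (.inl i)
          simp only [mayaN]
          rw [hq_apply, if_neg hik]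
      | inr j =>
        by_cases hjj : (j : ℕ) = p k - 1
        · have hx : (Sum.inr j : Fin N ⊕ Fin M) = Sum.inr j0 := by
            congr 1; exact Fin.ext hjj
          rw [hx, hvq_rj, Equiv.swap_apply_right]
          apply Fin.ext
          show mayaN p N M (.inr j0) = p k - 1 + (N - 1 - k)
          show (j0 : ℕ) + N - cnj p N j0 = p k - 1 + (N - 1 - k)
          have : (j0 : ℕ) = p k - 1 := rfl
          rw [this, hcp]
          omega
        · have hne1 : mayaE q N M hq_anti hq_N hq_M (.inr j) ≠ a' := by
            rw [← hvq_lk]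
            intro hcon
            exact Sum.inr_ne_inl (hinj hcon)
          have hne2 : mayaE q N M hq_anti hq_N hq_M (.inr j) ≠ a := by
            rw [← hvq_rj]
            intro hcon
            have := hinj hcon
            simp only [Sum.inr.injEq] at this
            exact hjj (congrArg Fin.val this)
          rw [Equiv.swap_apply_of_ne_of_ne hne1 hne2]
          apply Fin.ext
          show mayaN p N M (.inr j) = mayaN q N M (.inr j)
          simp only [mayaN]
          rw [hcsame j hjj]
    have hperm : mayaP p N M hp hN hM =
        (Equiv.swap a' a) * (mayaP q N M hq_anti hq_N hq_M) := by
      rw [mayaP, hkey, mayaP]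
      rfl
    rw [hperm, map_mul, Equiv.Perm.sign_swap hane, ih q hq_anti hq_N hq_M hq_sum]
    simp [pow_succ, mul_comm, mul_left_comm, mul_assoc]

end SkewPf
namespace SkewPf

open Finset PowerSeries

variable {F : Type} [Field F]

lemma hList_zero (L : List F) : hList L 0 = 1 := by
  induction L with
  | nil => rfl
  | cons a as ih => simp [hList, ih]

lemma hGeom_zero (A r : F) : hGeom A r 0 = 1 := by simp [hGeom]

lemma mk_hList_nil : PowerSeries.mk (hList ([] : List F)) = 1 := by
  ext n
  cases n with
  | zero => simp [hList]
  | succ n => simp [hList, PowerSeries.coeff_one]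

lemma mk_hList_cons (a : F) (as : List F) :
    PowerSeries.mk (hList (a :: as)) =
      PowerSeries.mk (fun n => a ^ n) * PowerSeries.mk (hList as) := by
  ext n
  rw [PowerSeries.coeff_mul, Finset.Nat.sum_antidiagonal_eq_sum_range_succ_mk]
  simp [hList]

/-- helper: multiplication by `1 - C a * X` coefficientwise. -/
lemma one_sub_mul_eq (a : F) (f g : PowerSeries F)
    (h0 : PowerSeries.coeff 0 g = PowerSeries.coeff 0 f)
    (hs : ∀ n, PowerSeries.coeff (n + 1) g =
      PowerSeries.coeff (n + 1) f - a * PowerSeries.coeff n f) :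
    (1 - PowerSeries.C a * PowerSeries.X) * f = g := by
  have key : (1 - PowerSeries.C a * PowerSeries.X) * f
      = f - PowerSeries.C a * (PowerSeries.X * f) := by ring
  rw [key]
  ext n
  cases n with
  | zero =>
    rw [map_sub, PowerSeries.coeff_C_mul, PowerSeries.coeff_zero_X_mul]
    simpa using h0.symm
  | succ n =>
    rw [map_sub, PowerSeries.coeff_C_mul, PowerSeries.coeff_succ_X_mul]
    exact (hs n).symm

lemma geom_mul_inv (a : F) :
    (1 - PowerSeries.C a * PowerSeries.X) * PowerSeries.mk (fun n => a ^ n) = 1 := by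
  apply one_sub_mul_eq
  · simp
  · intro n
    simp [PowerSeries.coeff_one, pow_succ, mul_comm]

lemma prod_mul_mk_hList (L : List F) :
    (L.map (fun x => 1 - PowerSeries.C x * PowerSeries.X)).prod
      * PowerSeries.mk (hList L) = 1 := by
  induction L with
  | nil => simp [mk_hList_nil]
  | cons a as ih =>
    rw [List.map_cons, List.prod_cons, mk_hList_cons]
    calc (1 - PowerSeries.C a * PowerSeries.X) *
          (as.map (fun x => 1 - PowerSeries.C x * PowerSeries.X)).prod *
          (PowerSeries.mk (fun n => a ^ n) * PowerSeries.mk (hList as))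
        = ((1 - PowerSeries.C a * PowerSeries.X) * PowerSeries.mk (fun n => a ^ n)) *
          ((as.map (fun x => 1 - PowerSeries.C x * PowerSeries.X)).prod *
            PowerSeries.mk (hList as)) := by ring
      _ = 1 := by rw [geom_mul_inv, ih, one_mul]

lemma hGeom_step (A r : F) (hr : ∀ k : ℕ, 1 ≤ k → r ^ k ≠ 1) :
    (1 - PowerSeries.C A * PowerSeries.X) * PowerSeries.mk (hGeom A r)
      = PowerSeries.mk (hGeom (A * r) r) := by
  have hne : ∀ m : ℕ, (∏ k ∈ Finset.range m, (1 - r ^ (k + 1))) ≠ 0 := by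
    intro m
    apply Finset.prod_ne_zero_iff.mpr
    intro k _
    have := hr (k + 1) (by omega)
    intro hcon
    apply this
    linear_combination -hcon
  apply one_sub_mul_eq
  · simp [hGeom]
  · intro n
    simp only [PowerSeries.coeff_mk, hGeom]
    rw [Finset.prod_range_succ]
    have h1 : (1 - r ^ (n + 1)) ≠ 0 := by
      have := hr (n + 1) (by omega)
      intro hcon
      apply this
      linear_combination -hcon
    have h1' : (1 - r * r ^ n) ≠ 0 := by
      intro hcon
      apply h1
      rw [pow_succ]
      linear_combination hcon
    field_simp [hne n, h1, h1']
    ring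

lemma rescale_mk (u : F) (f : ℕ → F) :
    PowerSeries.rescale u (PowerSeries.mk f) = PowerSeries.mk fun n => u ^ n * f n := by
  ext n
  simp [PowerSeries.coeff_rescale]

lemma rescale_hGeom (u A r : F) :
    PowerSeries.rescale u (PowerSeries.mk (hGeom A r)) = PowerSeries.mk (hGeom (A * u) r) := by
  rw [rescale_mk]
  ext n
  simp only [PowerSeries.coeff_mk, hGeom, mul_pow]
  ring

lemma hGeom_telescope (A r : F) (hr : ∀ k : ℕ, 1 ≤ k → r ^ k ≠ 1) (N : ℕ) :
    PowerSeries.mk (hGeom (A * r ^ N) r) =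
      (∏ k ∈ Finset.range N, (1 - PowerSeries.C (A * r ^ k) * PowerSeries.X))
        * PowerSeries.mk (hGeom A r) := by
  induction N with
  | zero => simp
  | succ N ih =>
    have hstep := hGeom_step (A * r ^ N) r hr
    have : A * r ^ (N + 1) = A * r ^ N * r := by ring
    rw [this, ← hstep, ih, Finset.prod_range_succ]
    ring

lemma eq_one_of_rescale_eq (u : F) (hu : ∀ n : ℕ, 1 ≤ n → u ^ n ≠ 1)
    (P : PowerSeries F) (h : PowerSeries.rescale u P = P)
    (h0 : PowerSeries.coeff 0 P = 1) : P = 1 := by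
  ext n
  cases n with
  | zero => simpa using h0
  | succ n =>
    have hc := congrArg (PowerSeries.coeff (n + 1)) h
    rw [PowerSeries.coeff_rescale] at hc
    have h1 : (u ^ (n + 1) - 1) * PowerSeries.coeff (n + 1) P = 0 := by
      linear_combination hc
    rcases mul_eq_zero.mp h1 with h2 | h2
    · exact absurd (by linear_combination h2) (hu (n + 1) (by omega))
    · rw [h2]
      simp [PowerSeries.coeff_one]

section Claim0

variable (t : F) (ht0 : t ≠ 0) (ht : ∀ n : ℕ, 1 ≤ n → t ^ n ≠ 1)

include ht0 ht

lemma zpow_pow_ne_one (m : ℤ) (hm : m ≠ 0) : ∀ k : ℕ, 1 ≤ k → (t ^ m) ^ k ≠ 1 := by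
  intro k hk hcon
  rw [← zpow_natCast, ← zpow_mul] at hcon
  rcases lt_trichotomy (m * k) 0 with h | h | h
  · have : t ^ (-(m * (k : ℤ))) = 1 := by
      rw [zpow_neg, hcon, inv_one]
    rw [show -(m * (k : ℤ)) = ((-(m * k)).toNat : ℤ) by omega, zpow_natCast] at this
    exact ht _ (by omega) this
  · rcases mul_eq_zero.mp h with h' | h'
    · exact hm h'
    · omega
  · rw [show m * (k : ℤ) = ((m * k).toNat : ℤ) by omega, zpow_natCast] at hcon
    exact ht _ (by omega) hcon

lemma claim0 :
    PowerSeries.mk (hGeom (t ^ (-1 : ℤ)) (t ^ (-2 : ℤ)))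
      * PowerSeries.mk (hGeom t (t ^ (2 : ℤ))) = (1 : PowerSeries F) := by
  have hrneg : ∀ k : ℕ, 1 ≤ k → (t ^ (-2 : ℤ)) ^ k ≠ 1 := zpow_pow_ne_one t ht0 ht (-2) (by omega)
  have hrpos : ∀ k : ℕ, 1 ≤ k → (t ^ (2 : ℤ)) ^ k ≠ 1 := zpow_pow_ne_one t ht0 ht 2 (by omega)
  have htm : t * t ^ (-2 : ℤ) = t ^ (-1 : ℤ) := by
    nth_rewrite 1 [show (t : F) = t ^ (1 : ℤ) from (zpow_one t).symm]
    rw [← zpow_add₀ ht0]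
    norm_num
  have htp : t * t ^ (2 : ℤ) = t ^ (3 : ℤ) := by
    nth_rewrite 1 [show (t : F) = t ^ (1 : ℤ) from (zpow_one t).symm]
    rw [← zpow_add₀ ht0]
    norm_num
  have hta : t ^ (-1 : ℤ) * t ^ (2 : ℤ) = t := by
    rw [← zpow_add₀ ht0]
    norm_num
  have e1 : (1 - PowerSeries.C t * PowerSeries.X) * PowerSeries.mk (hGeom t (t ^ (-2 : ℤ)))
      = PowerSeries.mk (hGeom (t ^ (-1 : ℤ)) (t ^ (-2 : ℤ))) := by
    have := hGeom_step t (t ^ (-2 : ℤ)) hrneg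
    rwa [htm] at this
  have e2 : (1 - PowerSeries.C t * PowerSeries.X) * PowerSeries.mk (hGeom t (t ^ (2 : ℤ)))
      = PowerSeries.mk (hGeom (t ^ (3 : ℤ)) (t ^ (2 : ℤ))) := by
    have := hGeom_step t (t ^ (2 : ℤ)) hrpos
    rwa [htp] at this
  set P := PowerSeries.mk (hGeom (t ^ (-1 : ℤ)) (t ^ (-2 : ℤ)))
      * PowerSeries.mk (hGeom t (t ^ (2 : ℤ))) with hP
  have hres : PowerSeries.rescale (t ^ (2 : ℤ)) P = P := by
    rw [hP, map_mul, rescale_hGeom, rescale_hGeom, hta, htp, ← e1, ← e2]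
    ring
  apply eq_one_of_rescale_eq (t ^ (2 : ℤ)) (zpow_pow_ne_one t ht0 ht 2 (by omega)) P hres
  rw [hP, PowerSeries.coeff_mul]
  simp [hGeom_zero]

end Claim0

end SkewPf
namespace SkewPf

open Finset PowerSeries

variable {F : Type} [Field F]

section Conv

variable (t : F) (ht0 : t ≠ 0) (ht : ∀ n : ℕ, 1 ≤ n → t ^ n ≠ 1)

lemma zpow_mul_zpow_nat (m b : ℤ) (k : ℕ) (hb : t ≠ 0) :
    t ^ m * (t ^ b) ^ k = t ^ (m + b * k) := by
  rw [← zpow_natCast (t ^ b) k, ← zpow_mul, ← zpow_add₀ hb]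

include ht0 ht in
lemma maya_prod (p : ℕ → ℕ) (N M : ℕ)
    (hp : ∀ ⦃i j : ℕ⦄, i ≤ j → p j ≤ p i) (hN : ∀ i, N ≤ i → p i = 0) (hM : p 0 ≤ M) :
    (∏ i : Fin N, (1 - PowerSeries.C (t ^ (2 * (p i : ℤ) - 2 * (i : ℤ) - 1)) * PowerSeries.X))
      * (∏ j : Fin M, (1 - PowerSeries.C
          (t ^ (-(2 * (cnj p N j : ℤ)) + 2 * (j : ℤ) + 1)) * PowerSeries.X))
    = (∏ k ∈ Finset.range N, (1 - PowerSeries.C (t ^ (-(2 * (k : ℤ)) - 1)) * PowerSeries.X))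
      * (∏ k ∈ Finset.range M, (1 - PowerSeries.C (t ^ (2 * (k : ℤ) + 1)) * PowerSeries.X)) := by
  set g : Fin (N + M) → PowerSeries F :=
    fun v => 1 - PowerSeries.C (t ^ (2 * (v : ℤ) - 2 * (N : ℤ) + 1)) * PowerSeries.X with hg
  have hLHS : (∏ x : Fin N ⊕ Fin M, g (mayaE p N M hp hN hM x))
      = (∏ i : Fin N, (1 - PowerSeries.C (t ^ (2 * (p i : ℤ) - 2 * (i : ℤ) - 1)) * PowerSeries.X))
        * (∏ j : Fin M, (1 - PowerSeries.C
            (t ^ (-(2 * (cnj p N j : ℤ)) + 2 * (j : ℤ) + 1)) * PowerSeries.X)) := by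
    rw [Fintype.prod_sum_type]
    congr 1
    · apply Finset.prod_congr rfl
      intro i _
      have hiN : (i : ℕ) < N := i.isLt
      have hval : ((mayaE p N M hp hN hM (Sum.inl i) : Fin (N + M)) : ℕ)
          = p i + (N - 1 - (i : ℕ)) := rfl
      have hexp : 2 * ((p (i : ℕ) + (N - 1 - (i : ℕ)) : ℕ) : ℤ) - 2 * (N : ℤ) + 1
          = 2 * (p (i : ℕ) : ℤ) - 2 * ((i : ℕ) : ℤ) - 1 := by omega
      simp only [hg]
      rw [hval, hexp]
    · apply Finset.prod_congr rfl
      intro j _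
      have hjM : (j : ℕ) < M := j.isLt
      have hcle : cnj p N j ≤ N := cnj_le p N j
      have hval : ((mayaE p N M hp hN hM (Sum.inr j) : Fin (N + M)) : ℕ)
          = (j : ℕ) + N - cnj p N j := rfl
      have hexp : 2 * (((j : ℕ) + N - cnj p N (j : ℕ) : ℕ) : ℤ) - 2 * (N : ℤ) + 1
          = -(2 * (cnj p N (j : ℕ) : ℤ)) + 2 * ((j : ℕ) : ℤ) + 1 := by omega
      simp only [hg]
      rw [hval, hexp]
  have hRHS : (∏ x : Fin N ⊕ Fin M, g (finSumFinEquiv x))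
      = (∏ k ∈ Finset.range N, (1 - PowerSeries.C (t ^ (-(2 * (k : ℤ)) - 1)) * PowerSeries.X))
        * (∏ k ∈ Finset.range M, (1 - PowerSeries.C (t ^ (2 * (k : ℤ) + 1)) * PowerSeries.X)) := by
    rw [Fintype.prod_sum_type]
    congr 1
    · have step1 : ∀ i : Fin N, g (finSumFinEquiv (Sum.inl i))
          = 1 - PowerSeries.C (t ^ (-(2 * ((N - 1 - (i : ℕ) : ℕ) : ℤ)) - 1)) * PowerSeries.X := by
        intro i
        have hiN : (i : ℕ) < N := i.isLt
        have hval : ((finSumFinEquiv (Sum.inl i) : Fin (N + M)) : ℕ) = (i : ℕ) := by simp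
        have hexp : 2 * (((i : ℕ) : ℕ) : ℤ) - 2 * (N : ℤ) + 1
            = -(2 * ((N - 1 - (i : ℕ) : ℕ) : ℤ)) - 1 := by omega
        simp only [hg]
        rw [hval, hexp]
      rw [Finset.prod_congr rfl (fun i _ => step1 i),
        Fin.prod_univ_eq_prod_range
          (fun k => 1 - PowerSeries.C (t ^ (-(2 * ((N - 1 - k : ℕ) : ℤ)) - 1)) * PowerSeries.X) N,
        Finset.prod_range_reflect
          (fun m => 1 - PowerSeries.C (t ^ (-(2 * (m : ℤ)) - 1)) * PowerSeries.X) N]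
    · have step2 : ∀ j : Fin M, g (finSumFinEquiv (Sum.inr j))
          = 1 - PowerSeries.C (t ^ (2 * ((j : ℕ) : ℤ) + 1)) * PowerSeries.X := by
        intro j
        have hval : ((finSumFinEquiv (Sum.inr j) : Fin (N + M)) : ℕ) = N + (j : ℕ) := by simp
        have hexp : 2 * ((N + (j : ℕ) : ℕ) : ℤ) - 2 * (N : ℤ) + 1 = 2 * ((j : ℕ) : ℤ) + 1 := by
          omega
        simp only [hg]
        rw [hval, hexp]
      rw [Finset.prod_congr rfl (fun j _ => step2 j),
        Fin.prod_univ_eq_prod_range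
          (fun k => 1 - PowerSeries.C (t ^ (2 * (k : ℤ) + 1)) * PowerSeries.X) M]
  rw [← hLHS, ← hRHS, Equiv.prod_comp (mayaE p N M hp hN hM) g,
    Equiv.prod_comp finSumFinEquiv g]

include ht0 ht in
lemma conv (ν : Ptn) :
    PowerSeries.mk (hPos t 1 ν) * PowerSeries.mk (hNeg t 1 (pconj ν)) = 1 := by
  classical
  set N := ν.bnd with hN_def
  set M := ν.parts 0 with hM_def
  have hrneg : ∀ k : ℕ, 1 ≤ k → (t ^ (-2 : ℤ)) ^ k ≠ 1 := zpow_pow_ne_one t ht0 ht (-2) (by omega)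
  have hrpos : ∀ k : ℕ, 1 ≤ k → (t ^ (2 : ℤ)) ^ k ≠ 1 := zpow_pow_ne_one t ht0 ht 2 (by omega)
  -- split hPos as product of two series
  have hsplitP : PowerSeries.mk (hPos t 1 ν) =
      PowerSeries.mk (hList (List.ofFn fun i : Fin N =>
        (1 : F) * t ^ (2 * (ν.parts i : ℤ) - 2 * (i : ℤ) - 1)))
      * PowerSeries.mk (hGeom ((1 : F) * t ^ (-(2 * (N : ℤ)) - 1)) (t ^ (-2 : ℤ))) := by
    ext n
    rw [PowerSeries.coeff_mul, Finset.Nat.sum_antidiagonal_eq_sum_range_succ_mk]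
    simp [hPos]
    rfl
  have hsplitN : PowerSeries.mk (hNeg t 1 (pconj ν)) =
      PowerSeries.mk (hList (List.ofFn fun j : Fin M =>
        (1 : F) * t ^ (-(2 * ((pconj ν).parts j : ℤ)) + 2 * (j : ℤ) + 1)))
      * PowerSeries.mk (hGeom ((1 : F) * t ^ (2 * (M : ℤ) + 1)) (t ^ (2 : ℤ))) := by
    ext n
    rw [PowerSeries.coeff_mul, Finset.Nat.sum_antidiagonal_eq_sum_range_succ_mk]
    simp [hNeg]
    rfl
  -- telescopes
  have htelP : PowerSeries.mk (hGeom ((1 : F) * t ^ (-(2 * (N : ℤ)) - 1)) (t ^ (-2 : ℤ)))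
      = (∏ k ∈ Finset.range N, (1 - PowerSeries.C (t ^ (-(2 * (k : ℤ)) - 1)) * PowerSeries.X))
        * PowerSeries.mk (hGeom (t ^ (-1 : ℤ)) (t ^ (-2 : ℤ))) := by
    have := hGeom_telescope (t ^ (-1 : ℤ)) (t ^ (-2 : ℤ)) hrneg N
    rw [zpow_mul_zpow_nat t (-1) (-2) N ht0] at this
    rw [show (1 : F) * t ^ (-(2 * (N : ℤ)) - 1) = t ^ (-1 + -2 * (N : ℤ)) by rw [one_mul]; congr 1; ring]
    rw [this]
    congr 1
    apply Finset.prod_congr rfl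
    intro k _
    rw [zpow_mul_zpow_nat t (-1) (-2) k ht0]
    congr 2
    ring
  have htelN : PowerSeries.mk (hGeom ((1 : F) * t ^ (2 * (M : ℤ) + 1)) (t ^ (2 : ℤ)))
      = (∏ k ∈ Finset.range M, (1 - PowerSeries.C (t ^ (2 * (k : ℤ) + 1)) * PowerSeries.X))
        * PowerSeries.mk (hGeom t (t ^ (2 : ℤ))) := by
    have := hGeom_telescope t (t ^ (2 : ℤ)) hrpos M
    have h2 : t * (t ^ (2:ℤ)) ^ M = t ^ (1 + 2 * (M : ℤ)) := by
      have := zpow_mul_zpow_nat t 1 2 M ht0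
      rw [zpow_one] at this
      rw [this]
    rw [h2] at this
    rw [show (1 : F) * t ^ (2 * (M : ℤ) + 1) = t ^ (1 + 2 * (M : ℤ)) by rw [one_mul]; congr 1; ring]
    rw [this]
    congr 1
    apply Finset.prod_congr rfl
    intro k _
    have hk : t * (t ^ (2:ℤ)) ^ k = t ^ (1 + 2 * (k : ℤ)) := by
      have := zpow_mul_zpow_nat t 1 2 k ht0
      rw [zpow_one] at this
      rw [this]
    rw [hk]
    congr 2
    ring
  -- list parts are invertible against the letter products
  have hlistP := prod_mul_mk_hList (L := List.ofFn fun i : Fin N =>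
      (1 : F) * t ^ (2 * (ν.parts i : ℤ) - 2 * (i : ℤ) - 1))
  have hlistN := prod_mul_mk_hList (L := List.ofFn fun j : Fin M =>
      (1 : F) * t ^ (-(2 * ((pconj ν).parts j : ℤ)) + 2 * (j : ℤ) + 1))
  rw [List.map_ofFn, List.prod_ofFn] at hlistP hlistN
  simp only [Function.comp] at hlistP hlistN
  -- maya
  have hmaya := maya_prod t ht0 ht ν.parts N M ν.anti ν.bnd_spec (le_of_eq hM_def.symm)
  have hpc : ∀ j : ℕ, (pconj ν).parts j = cnj ν.parts N j := fun j => rfl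
  -- put it all together
  rw [hsplitP, hsplitN, htelP, htelN]
  have hc0 := claim0 t ht0 ht
  calc PowerSeries.mk (hList (List.ofFn fun i : Fin N =>
        (1 : F) * t ^ (2 * (ν.parts i : ℤ) - 2 * (i : ℤ) - 1)))
      * ((∏ k ∈ Finset.range N, (1 - PowerSeries.C (t ^ (-(2 * (k : ℤ)) - 1)) * PowerSeries.X))
        * PowerSeries.mk (hGeom (t ^ (-1 : ℤ)) (t ^ (-2 : ℤ))))
      * (PowerSeries.mk (hList (List.ofFn fun j : Fin M =>
        (1 : F) * t ^ (-(2 * ((pconj ν).parts j : ℤ)) + 2 * (j : ℤ) + 1)))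
      * ((∏ k ∈ Finset.range M, (1 - PowerSeries.C (t ^ (2 * (k : ℤ) + 1)) * PowerSeries.X))
        * PowerSeries.mk (hGeom t (t ^ (2 : ℤ)))))
      = (PowerSeries.mk (hList (List.ofFn fun i : Fin N =>
          (1 : F) * t ^ (2 * (ν.parts i : ℤ) - 2 * (i : ℤ) - 1)))
        * PowerSeries.mk (hList (List.ofFn fun j : Fin M =>
          (1 : F) * t ^ (-(2 * ((pconj ν).parts j : ℤ)) + 2 * (j : ℤ) + 1))))
        * ((∏ k ∈ Finset.range N, (1 - PowerSeries.C (t ^ (-(2 * (k : ℤ)) - 1)) * PowerSeries.X))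
          * (∏ k ∈ Finset.range M, (1 - PowerSeries.C (t ^ (2 * (k : ℤ) + 1)) * PowerSeries.X)))
        * (PowerSeries.mk (hGeom (t ^ (-1 : ℤ)) (t ^ (-2 : ℤ)))
          * PowerSeries.mk (hGeom t (t ^ (2 : ℤ)))) := by ring
    _ = 1 := by
        rw [hc0, mul_one, ← hmaya]
        have hone : ∀ (i : Fin N), (1 : F) * t ^ (2 * (ν.parts i : ℤ) - 2 * (i : ℤ) - 1)
            = t ^ (2 * (ν.parts i : ℤ) - 2 * (i : ℤ) - 1) := fun i => one_mul _
        calc PowerSeries.mk (hList (List.ofFn fun i : Fin N =>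
              (1 : F) * t ^ (2 * (ν.parts i : ℤ) - 2 * (i : ℤ) - 1)))
            * PowerSeries.mk (hList (List.ofFn fun j : Fin M =>
              (1 : F) * t ^ (-(2 * ((pconj ν).parts j : ℤ)) + 2 * (j : ℤ) + 1)))
            * ((∏ i : Fin N, (1 - PowerSeries.C
                (t ^ (2 * (ν.parts i : ℤ) - 2 * (i : ℤ) - 1)) * PowerSeries.X))
              * (∏ j : Fin M, (1 - PowerSeries.C
                (t ^ (-(2 * (cnj ν.parts N j : ℤ)) + 2 * (j : ℤ) + 1)) * PowerSeries.X)))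
            = ((∏ i : Fin N, (1 - PowerSeries.C
                ((1 : F) * t ^ (2 * (ν.parts i : ℤ) - 2 * (i : ℤ) - 1)) * PowerSeries.X))
              * PowerSeries.mk (hList (List.ofFn fun i : Fin N =>
                (1 : F) * t ^ (2 * (ν.parts i : ℤ) - 2 * (i : ℤ) - 1))))
            * ((∏ j : Fin M, (1 - PowerSeries.C
                ((1 : F) * t ^ (-(2 * ((pconj ν).parts j : ℤ)) + 2 * (j : ℤ) + 1)) * PowerSeries.X))
              * PowerSeries.mk (hList (List.ofFn fun j : Fin M =>
                (1 : F) * t ^ (-(2 * ((pconj ν).parts j : ℤ)) + 2 * (j : ℤ) + 1)))) := by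
              simp only [one_mul, hpc]
              ring
          _ = 1 := by rw [hlistP, hlistN, one_mul]

include ht0 ht in
lemma conv_coeff (ν : Ptn) (n : ℕ) :
    ∑ k ∈ Finset.range (n + 1), hPos t 1 ν k * hNeg t 1 (pconj ν) (n - k)
      = if n = 0 then 1 else 0 := by
  have hc := congrArg (PowerSeries.coeff n) (conv t ht0 ht ν)
  rw [PowerSeries.coeff_mul, Finset.Nat.sum_antidiagonal_eq_sum_range_succ_mk] at hc
  simpa [PowerSeries.coeff_one] using hc

end Conv

end SkewPf
namespace SkewPf

open Finset Matrix

variable {F : Type} [Field F]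

lemma hZ_natCast (h : ℕ → F) (n : ℕ) : hZ h (n : ℤ) = h n := by
  simp [hZ]

lemma hZ_neg (h : ℕ → F) {m : ℤ} (hm : m < 0) : hZ h m = 0 := by
  simp [hZ, not_le.mpr hm]

lemma hPos_zero (t c : F) (ν : Ptn) : hPos t c ν 0 = 1 := by
  simp [hPos, hList_zero, hGeom_zero]

lemma hNeg_zero (t c : F) (ν : Ptn) : hNeg t c ν 0 = 1 := by
  simp [hNeg, hList_zero, hGeom_zero]

/-- determinant of the unitriangular Toeplitz matrix is 1 -/
lemma det_toeplitz_one (h : ℕ → F) (h0 : h 0 = 1) (K : ℕ) :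
    (Matrix.of fun i j : Fin K => hZ h ((i : ℤ) - (j : ℤ))).det = 1 := by
  have htri : (Matrix.of fun i j : Fin K => hZ h ((i : ℤ) - (j : ℤ))).BlockTriangular
      OrderDual.toDual := by
    intro i j hij
    have hlt : i < j := hij
    have hlt' : (i : ℕ) < (j : ℕ) := hlt
    apply hZ_neg
    omega
  rw [Matrix.det_of_lowerTriangular _ htri]
  apply Finset.prod_eq_one
  intro i _
  show hZ h ((i : ℤ) - (i : ℤ)) = 1
  rw [sub_self, show (0 : ℤ) = ((0 : ℕ) : ℤ) from rfl, hZ_natCast, h0]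

/-- product of the two Toeplitz matrices built from a convolution-inverse pair -/
lemma toeplitz_mul_eq_one (h g : ℕ → F)
    (hc : ∀ n, ∑ k ∈ Finset.range (n + 1), h k * g (n - k) = if n = 0 then 1 else 0) (K : ℕ) :
    (Matrix.of fun i j : Fin K => hZ h ((i : ℤ) - (j : ℤ)))
      * (Matrix.of fun i j : Fin K => hZ g ((i : ℤ) - (j : ℤ))) = 1 := by
  ext i j
  rw [Matrix.mul_apply]
  simp only [Matrix.of_apply]
  by_cases hij : (j : ℕ) ≤ (i : ℕ)
  · have hsum : ∑ k : Fin K, hZ h ((i : ℤ) - (k : ℤ)) * hZ g ((k : ℤ) - (j : ℤ))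
        = ∑ k ∈ Finset.range K, hZ h ((i : ℤ) - (k : ℤ)) * hZ g ((k : ℤ) - (j : ℤ)) :=
      Fin.sum_univ_eq_sum_range (fun k => hZ h ((i : ℤ) - (k : ℤ)) * hZ g ((k : ℤ) - (j : ℤ))) K
    rw [hsum]
    have hstep1 : ∑ k ∈ Finset.range K, hZ h ((i : ℤ) - (k : ℤ)) * hZ g ((k : ℤ) - (j : ℤ))
        = ∑ k ∈ Finset.range ((i : ℕ) + 1), hZ h ((i : ℤ) - (k : ℤ)) * hZ g ((k : ℤ) - (j : ℤ)) := by
      symm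
      apply Finset.sum_subset
      · intro k hk
        simp only [Finset.mem_range] at hk ⊢
        have := i.isLt
        omega
      · intro k _ hk
        simp only [Finset.mem_range] at hk
        have : (i : ℤ) - (k : ℤ) < 0 := by omega
        rw [hZ_neg h this, zero_mul]
    rw [hstep1]
    set n : ℕ := (i : ℕ) - (j : ℕ) with hn_def
    have hsplit : (i : ℕ) + 1 = (j : ℕ) + (n + 1) := by omega
    rw [hsplit, Finset.sum_range_add]
    have hfirst : ∑ k ∈ Finset.range (j : ℕ),
        hZ h ((i : ℤ) - (k : ℤ)) * hZ g ((k : ℤ) - (j : ℤ)) = 0 := by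
      apply Finset.sum_eq_zero
      intro k hk
      simp only [Finset.mem_range] at hk
      have : (k : ℤ) - (j : ℤ) < 0 := by omega
      rw [hZ_neg g this, mul_zero]
    rw [hfirst, zero_add]
    have hsecond : ∑ k ∈ Finset.range (n + 1),
        hZ h ((i : ℤ) - (((j : ℕ) + k : ℕ) : ℤ)) * hZ g ((((j : ℕ) + k : ℕ) : ℤ) - (j : ℤ))
        = ∑ k ∈ Finset.range (n + 1), h (n - k) * g k := by
      apply Finset.sum_congr rfl
      intro k hk
      simp only [Finset.mem_range] at hk
      have e1 : (i : ℤ) - (((j : ℕ) + k : ℕ) : ℤ) = ((n - k : ℕ) : ℤ) := by push_cast; omega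
      have e2 : (((j : ℕ) + k : ℕ) : ℤ) - (j : ℤ) = ((k : ℕ) : ℤ) := by push_cast; ring
      rw [e1, e2, hZ_natCast, hZ_natCast]
    rw [hsecond]
    have hflip : ∑ k ∈ Finset.range (n + 1), h (n - k) * g k
        = ∑ k ∈ Finset.range (n + 1), h k * g (n - k) := by
      rw [← Finset.sum_range_reflect (fun k => h k * g (n - k)) (n + 1)]
      apply Finset.sum_congr rfl
      intro k hk
      simp only [Finset.mem_range] at hk
      congr 2
      omega
    rw [hflip, hc n, Matrix.one_apply]
    rw [if_congr (show (n = 0) ↔ (i = j) from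
      ⟨fun h0 => Fin.ext (by omega), fun h0 => by rw [h0] at hn_def; omega⟩) rfl rfl]
  · have hz : ∑ k : Fin K, hZ h ((i : ℤ) - (k : ℤ)) * hZ g ((k : ℤ) - (j : ℤ)) = 0 := by
      apply Finset.sum_eq_zero
      intro k _
      by_cases hk : (k : ℕ) ≤ (i : ℕ)
      · rw [hZ_neg g (by omega), mul_zero]
      · rw [hZ_neg h (by omega), zero_mul]
    rw [hz, Matrix.one_apply_ne]
    intro hcon
    rw [hcon] at hij
    omega

/-- Jacobi's complementary-minor identity in block form. -/
lemma jacobi_block {α β : Type} [Fintype α] [Fintype β] [DecidableEq α] [DecidableEq β]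
    (A B : Matrix (α ⊕ β) (α ⊕ β) F) (hAB : A * B = 1) :
    A.toBlocks₁₁.det = A.det * B.toBlocks₂₂.det := by
  have hA : A = Matrix.fromBlocks A.toBlocks₁₁ A.toBlocks₁₂ A.toBlocks₂₁ A.toBlocks₂₂ :=
    (Matrix.fromBlocks_toBlocks A).symm
  have hB : B = Matrix.fromBlocks B.toBlocks₁₁ B.toBlocks₁₂ B.toBlocks₂₁ B.toBlocks₂₂ :=
    (Matrix.fromBlocks_toBlocks B).symm
  have hone : (1 : Matrix (α ⊕ β) (α ⊕ β) F) = Matrix.fromBlocks 1 0 0 1 :=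
    (Matrix.fromBlocks_one).symm
  have hmul : A * B = Matrix.fromBlocks
      (A.toBlocks₁₁ * B.toBlocks₁₁ + A.toBlocks₁₂ * B.toBlocks₂₁)
      (A.toBlocks₁₁ * B.toBlocks₁₂ + A.toBlocks₁₂ * B.toBlocks₂₂)
      (A.toBlocks₂₁ * B.toBlocks₁₁ + A.toBlocks₂₂ * B.toBlocks₂₁)
      (A.toBlocks₂₁ * B.toBlocks₁₂ + A.toBlocks₂₂ * B.toBlocks₂₂) := by
    nth_rewrite 1 [hA, hB]
    rw [Matrix.fromBlocks_multiply]
  have h12 : A.toBlocks₁₁ * B.toBlocks₁₂ + A.toBlocks₁₂ * B.toBlocks₂₂ = 0 := by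
    have := congrArg Matrix.toBlocks₁₂ (hmul.symm.trans (hAB.trans hone))
    rwa [Matrix.toBlocks_fromBlocks₁₂, Matrix.toBlocks_fromBlocks₁₂] at this
  have h22 : A.toBlocks₂₁ * B.toBlocks₁₂ + A.toBlocks₂₂ * B.toBlocks₂₂ = 1 := by
    have := congrArg Matrix.toBlocks₂₂ (hmul.symm.trans (hAB.trans hone))
    rwa [Matrix.toBlocks_fromBlocks₂₂, Matrix.toBlocks_fromBlocks₂₂] at this
  have hkey : A * Matrix.fromBlocks 1 B.toBlocks₁₂ 0 B.toBlocks₂₂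
      = Matrix.fromBlocks A.toBlocks₁₁ 0 A.toBlocks₂₁ 1 := by
    nth_rewrite 1 [hA]
    rw [Matrix.fromBlocks_multiply]
    simp [h12, h22]
  have hdet := congrArg Matrix.det hkey
  rw [Matrix.det_mul, Matrix.det_fromBlocks_zero₂₁, Matrix.det_fromBlocks_zero₁₂] at hdet
  simp only [Matrix.det_one, one_mul, mul_one] at hdet
  exact hdet.symm

lemma psize_ext (μ : Ptn) {R : ℕ} (hR : μ.bnd ≤ R) :
    ∑ i ∈ Finset.range R, μ.parts i = psize μ := by
  rw [psize]
  symm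
  apply Finset.sum_subset
  · intro k hk
    simp only [Finset.mem_range] at hk ⊢
    omega
  · intro k _ hk
    simp only [Finset.mem_range] at hk
    exact μ.bnd_spec k (by omega)

lemma neg_one_zpow_eq (a b : ℕ) :
    (-1 : F) ^ ((a : ℤ) - (b : ℤ)) = (-1 : F) ^ (a + b) := by
  have hne : (-1 : F) ≠ 0 := by norm_num
  rw [zpow_sub₀ hne, zpow_natCast, zpow_natCast, pow_add, div_eq_mul_inv]
  congr 1
  exact inv_eq_of_mul_eq_one_right (by rw [← pow_add]; exact Even.neg_one_pow ⟨b, by ring⟩)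

end SkewPf
namespace SkewPf

open Finset Matrix Equiv

lemma ratfunc_pow_ne_one : ∀ n : ℕ, 1 ≤ n → (RatFunc.X : RatFunc ℚ) ^ n ≠ 1 := by
  intro n hn hcon
  have hX : (Polynomial.X : Polynomial ℚ) ^ n = 1 := by
    apply RatFunc.algebraMap_injective ℚ
    rw [map_pow, _root_.map_one, RatFunc.algebraMap_X]
    exact hcon
  have hdeg := congrArg Polynomial.natDegree hX
  rw [Polynomial.natDegree_X_pow, Polynomial.natDegree_one] at hdeg
  omega

theorem main_statement (lam mu ν : Ptn) :
    sP (RatFunc.X : RatFunc ℚ) lam mu ν =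
      (-1 : RatFunc ℚ) ^ ((psize lam : ℤ) - (psize mu : ℤ)) *
        sN (RatFunc.X : RatFunc ℚ) (pconj lam) (pconj mu) (pconj ν) := by
  classical
  set t : RatFunc ℚ := RatFunc.X with ht_def
  have ht0 : t ≠ 0 := RatFunc.X_ne_zero
  have ht : ∀ n : ℕ, 1 ≤ n → t ^ n ≠ 1 := ratfunc_pow_ne_one
  set r : ℕ := lam.bnd + mu.bnd with hr_def
  set c : ℕ := lam.parts 0 + mu.parts 0 with hc_def
  set h : ℕ → RatFunc ℚ := hPos t 1 ν with hh_def
  set g : ℕ → RatFunc ℚ := hNeg t 1 (pconj ν) with hg_def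
  have hconv : ∀ n, ∑ k ∈ Finset.range (n + 1), h k * g (n - k) = if n = 0 then 1 else 0 :=
    conv_coeff t ht0 ht ν
  set A : Matrix (Fin (r + c)) (Fin (r + c)) (RatFunc ℚ) :=
    Matrix.of (fun i j : Fin (r + c) => hZ h ((i : ℤ) - (j : ℤ))) with hA_def
  set B : Matrix (Fin (r + c)) (Fin (r + c)) (RatFunc ℚ) :=
    Matrix.of (fun i j : Fin (r + c) => hZ g ((i : ℤ) - (j : ℤ))) with hB_def
  have hAB : A * B = 1 := toeplitz_mul_eq_one h g hconv (r + c)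
  have hdetA : A.det = 1 := det_toeplitz_one h (hPos_zero t 1 ν) (r + c)
  -- the two Maya equivs
  have hlam_bnd : ∀ i, r ≤ i → lam.parts i = 0 := fun i hi => lam.bnd_spec i (by omega)
  have hmu_bnd : ∀ i, r ≤ i → mu.parts i = 0 := fun i hi => mu.bnd_spec i (by omega)
  have hlam_M : lam.parts 0 ≤ c := by omega
  have hmu_M : mu.parts 0 ≤ c := by omega
  set eR : (Fin r ⊕ Fin c) ≃ Fin (r + c) := mayaE lam.parts r c lam.anti hlam_bnd hlam_M with heR
  set eC : (Fin r ⊕ Fin c) ≃ Fin (r + c) := mayaE mu.parts r c mu.anti hmu_bnd hmu_M with heC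
  set Ah : Matrix (Fin r ⊕ Fin c) (Fin r ⊕ Fin c) (RatFunc ℚ) := A.submatrix eR eC with hAh_def
  set Bh : Matrix (Fin r ⊕ Fin c) (Fin r ⊕ Fin c) (RatFunc ℚ) := B.submatrix eC eR with hBh_def
  have hAhBh : Ah * Bh = 1 := by
    rw [hAh_def, hBh_def, Matrix.submatrix_mul_equiv A B (⇑eR) eC (⇑eR), hAB,
      Matrix.submatrix_one_equiv eR]
  have hjac : Ah.toBlocks₁₁.det = Ah.det * Bh.toBlocks₂₂.det := jacobi_block Ah Bh hAhBh
  -- LHS identification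
  have hLHS : sP t lam mu ν = Ah.toBlocks₁₁.det := by
    rw [sP, sJT]
    congr 1
    ext i j
    have hv1 : ((eR (Sum.inl i) : Fin (r + c)) : ℕ) = lam.parts i + (r - 1 - (i : ℕ)) := rfl
    have hv2 : ((eC (Sum.inl j) : Fin (r + c)) : ℕ) = mu.parts j + (r - 1 - (j : ℕ)) := rfl
    show hZ h ((lam.parts i : ℤ) - (mu.parts j : ℤ) - (i : ℤ) + (j : ℤ))
        = hZ h ((((eR (Sum.inl i) : Fin (r + c)) : ℕ) : ℤ) - (((eC (Sum.inl j) : Fin (r + c)) : ℕ) : ℤ))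
    rw [hv1, hv2]
    congr 1
    have hi : (i : ℕ) < lam.bnd + mu.bnd := i.isLt
    have hj : (j : ℕ) < lam.bnd + mu.bnd := j.isLt
    omega
  -- RHS identification
  have hRHS : Bh.toBlocks₂₂.det = sN t (pconj lam) (pconj mu) (pconj ν) := by
    rw [sN, sJT, ← Matrix.det_transpose]
    congr 1
    ext i j
    have hv1 : ((eC (Sum.inr j) : Fin (r + c)) : ℕ) = (j : ℕ) + r - cnj mu.parts r j := rfl
    have hv2 : ((eR (Sum.inr i) : Fin (r + c)) : ℕ) = (i : ℕ) + r - cnj lam.parts r i := rfl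
    have hcl : cnj lam.parts r (i : ℕ) = (pconj lam).parts i := by
      rw [cnj_pconj]
      exact cnj_stab (by omega) lam.bnd_spec (i : ℕ)
    have hcm : cnj mu.parts r (j : ℕ) = (pconj mu).parts j := by
      rw [cnj_pconj]
      exact cnj_stab (by omega) mu.bnd_spec (j : ℕ)
    show hZ g ((((eC (Sum.inr j) : Fin (r + c)) : ℕ) : ℤ) - (((eR (Sum.inr i) : Fin (r + c)) : ℕ) : ℤ))
        = hZ g (((pconj lam).parts i : ℤ) - ((pconj mu).parts j : ℤ) - (i : ℤ) + (j : ℤ))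
    rw [hv1, hv2, ← hcl, ← hcm]
    congr 1
    have hc1 : cnj lam.parts r (i : ℕ) ≤ r := cnj_le _ _ _
    have hc2 : cnj mu.parts r (j : ℕ) ≤ r := cnj_le _ _ _
    omega
  -- the permutation and its sign
  set σ : Equiv.Perm (Fin r ⊕ Fin c) := eR.trans eC.symm with hσ_def
  have hAhperm : Ah = (A.submatrix eC eC).submatrix σ id := by
    ext i j
    simp only [hAh_def, Matrix.submatrix_apply, hσ_def, Equiv.trans_apply, id_eq,
      Equiv.apply_symm_apply]
  have hdetAh : Ah.det = ((Equiv.Perm.sign σ : ℤ) : RatFunc ℚ) := by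
    rw [hAhperm, Matrix.det_permute, Matrix.det_submatrix_equiv_self eC A, hdetA, mul_one]
  set πl : Equiv.Perm (Fin (r + c)) := mayaP lam.parts r c lam.anti hlam_bnd hlam_M with hπl
  set πm : Equiv.Perm (Fin (r + c)) := mayaP mu.parts r c mu.anti hmu_bnd hmu_M with hπm
  have hconj : σ = Equiv.permCongr finSumFinEquiv.symm (πl.trans πm.symm) := by
    apply Equiv.ext
    intro x
    simp only [hσ_def, Equiv.trans_apply, Equiv.permCongr_apply, Equiv.symm_symm,
      hπl, hπm, mayaP, Equiv.symm_trans_apply, Equiv.symm_apply_apply, heR, heC]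
  have hσsign : Equiv.Perm.sign σ = Equiv.Perm.sign πl * Equiv.Perm.sign πm := by
    rw [hconj, Equiv.Perm.sign_permCongr]
    rw [show Equiv.trans πl (Equiv.symm πm) = πm⁻¹ * πl from rfl]
    rw [_root_.map_mul, Equiv.Perm.sign_inv]
    exact mul_comm _ _
  have hsl := sign_mayaP r c (psize lam) lam.parts lam.anti hlam_bnd hlam_M
    (psize_ext lam (by omega))
  have hsm := sign_mayaP r c (psize mu) mu.parts mu.anti hmu_bnd hmu_M
    (psize_ext mu (by omega))
  have hσval : Equiv.Perm.sign σ = (-1) ^ (psize lam + psize mu) := by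
    rw [hσsign]
    rw [show Equiv.Perm.sign πl = (-1) ^ psize lam *
      Equiv.Perm.sign (mayaP (fun _ => 0) r c zeroFun_hyp1 (zeroFun_hyp2 r) (zeroFun_hyp3 c)) from hsl]
    rw [show Equiv.Perm.sign πm = (-1) ^ psize mu *
      Equiv.Perm.sign (mayaP (fun _ => 0) r c zeroFun_hyp1 (zeroFun_hyp2 r) (zeroFun_hyp3 c)) from hsm]
    rw [mul_mul_mul_comm, ← pow_add, Int.units_mul_self, mul_one]
  -- put everything together
  have hfinal : sP t lam mu ν =
      ((-1 : RatFunc ℚ) ^ (psize lam + psize mu)) * sN t (pconj lam) (pconj mu) (pconj ν) := by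
    rw [hLHS, hjac, hdetAh, hRHS, hσval]
    congr 1
    rw [Units.val_pow_eq_pow_val]
    push_cast
    norm_num
  rw [hfinal, neg_one_zpow_eq (psize lam) (psize mu)]

end SkewPf

/-- For partitions `λ, μ, ν`:
`s_{λ/μ}(q^{ν+ρ}) = (-1)^{|λ|-|μ|} s_{λ^t/μ^t}(q^{-ν^t-ρ})`,
an identity of rational functions in `t = q^{1/2}`. -/
theorem skew_schur_specialization_symmetry (lam mu ν : Ptn) :
    sP (RatFunc.X : RatFunc ℚ) lam mu ν =
      (-1 : RatFunc ℚ) ^ ((psize lam : ℤ) - (psize mu : ℤ)) *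
        sN (RatFunc.X : RatFunc ℚ) (pconj lam) (pconj mu) (pconj ν) :=
  SkewPf.main_statement lam mu ν
end
end

section
/- All coefficients C_k(μ,ν) of the Laurent polynomial f_{μ,ν}(q) are nonnegative integers. -/
open scoped LaurentSeries
noncomputable section

namespace CkAux
open Finset

noncomputable section

local notation "XX" => (RatFunc.X : RatFunc ℚ)

lemma hX : XX ≠ 0 := RatFunc.X_ne_zero

lemma hX1 : XX - 1 ≠ 0 := by
  intro h
  have h2 : (RatFunc.X : RatFunc ℚ) = algebraMap (Polynomial ℚ) _ 1 := by
    rw [map_one]; linear_combination h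
  rw [← RatFunc.algebraMap_X] at h2
  have := RatFunc.algebraMap_injective ℚ h2
  simpa using congrArg (Polynomial.coeff · 0) this

/-! ### Combinatorial data -/

def aP (μ : Ptn) (i : ℕ) : ℤ := (μ.parts i : ℤ) - ((i : ℤ) + 1)

lemma aP_ge (μ : Ptn) (i : ℕ) : -((i : ℤ) + 1) ≤ aP μ i := by
  have : (0 : ℤ) ≤ (μ.parts i : ℤ) := Int.natCast_nonneg _
  unfold aP; omega

lemma aP_lt (μ : Ptn) {i j : ℕ} (h : i < j) : aP μ j < aP μ i := by
  have h1 : μ.parts j ≤ μ.parts i := μ.anti h.le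
  have h2 : (μ.parts j : ℤ) ≤ (μ.parts i : ℤ) := Int.ofNat_le.2 h1
  have h3 : (i : ℤ) < (j : ℤ) := Int.ofNat_lt.2 h
  unfold aP; omega

lemma aP_inj (μ : Ptn) {i j : ℕ} (h : aP μ i = aP μ j) : i = j := by
  rcases lt_trichotomy i j with hlt | he | hgt
  · exact absurd h (aP_lt μ hlt).ne'
  · exact he
  · exact absurd h (aP_lt μ hgt).ne

/-- `D_ν(t)`: the coefficient of `q^t` in `Σ (q^{ν_i-i} - q^{-i})`. -/
def DD (ν : Ptn) (t : ℤ) : ℤ :=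
  ((((range ν.bnd).filter (fun i : ℕ => aP ν i = t)).card : ℤ))
    - (((range ν.bnd).filter (fun i : ℕ => -((i : ℤ) + 1) = t)).card : ℤ)

/-- `m_μ(k)`: the number of cells of `μ` of content `k`. -/
def mm (μ : Ptn) (k : ℤ) : ℕ :=
  ((range μ.bnd).filter (fun i : ℕ => -(i : ℤ) ≤ k ∧ k ≤ aP μ i)).card

lemma cardA_le_one (ν : Ptn) (t : ℤ) :
    ((range ν.bnd).filter (fun i : ℕ => aP ν i = t)).card ≤ 1 := by
  refine Finset.card_le_one.2 fun i hi j hj => ?_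
  simp only [mem_filter] at hi hj
  exact aP_inj ν (hi.2.trans hj.2.symm)

lemma cardB_eq (n : ℕ) (t : ℤ) :
    ((range n).filter (fun i : ℕ => -((i : ℤ) + 1) = t)).card
      = if -(n : ℤ) ≤ t ∧ t ≤ -1 then 1 else 0 := by
  split_ifs with h
  · have : (range n).filter (fun i : ℕ => -((i : ℤ) + 1) = t) = {(-t - 1).toNat} := by
      ext i
      simp only [mem_filter, mem_range, mem_singleton]
      omega
    rw [this, card_singleton]
  · have : (range n).filter (fun i : ℕ => -((i : ℤ) + 1) = t) = ∅ := by
      ext i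
      simp only [mem_filter, mem_range, notMem_empty, iff_false, not_and]
      intro hi
      omega
    rw [this, card_empty]

lemma DD_le_one (ν : Ptn) (t : ℤ) : DD ν t ≤ 1 := by
  have h1 := cardA_le_one ν t
  have h2 : (0 : ℤ) ≤ (((range ν.bnd).filter (fun i : ℕ => -((i : ℤ) + 1) = t)).card : ℤ) :=
    Int.natCast_nonneg _
  unfold DD; omega

lemma neg_one_le_DD (ν : Ptn) (t : ℤ) : -1 ≤ DD ν t := by
  have h1 := cardB_eq ν.bnd t
  have h2 : (0 : ℤ) ≤ (((range ν.bnd).filter (fun i : ℕ => aP ν i = t)).card : ℤ) :=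
    Int.natCast_nonneg _
  unfold DD
  split_ifs at h1 <;> omega

lemma DD_nonneg (ν : Ptn) {t : ℤ} (h : 0 ≤ t) : 0 ≤ DD ν t := by
  have h1 := cardB_eq ν.bnd t
  have h2 : ¬(-(ν.bnd : ℤ) ≤ t ∧ t ≤ -1) := by omega
  rw [if_neg h2] at h1
  have h3 : (0 : ℤ) ≤ (((range ν.bnd).filter (fun i : ℕ => aP ν i = t)).card : ℤ) :=
    Int.natCast_nonneg _
  unfold DD; omega

lemma DD_nonpos (ν : Ptn) {t : ℤ} (h : t < 0) : DD ν t ≤ 0 := by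
  unfold DD
  rcases Nat.eq_zero_or_pos ((range ν.bnd).filter (fun i : ℕ => aP ν i = t)).card with h0 | h0
  · have h3 : (0 : ℤ) ≤ (((range ν.bnd).filter (fun i : ℕ => -((i : ℤ) + 1) = t)).card : ℤ) :=
      Int.natCast_nonneg _
    omega
  · obtain ⟨i, hi⟩ := Finset.card_pos.1 h0
    simp only [mem_filter, mem_range] at hi
    have hge := aP_ge ν i
    have hB := cardB_eq ν.bnd t
    have hcond : -(ν.bnd : ℤ) ≤ t ∧ t ≤ -1 := by
      constructor
      · have : (i : ℤ) + 1 ≤ (ν.bnd : ℤ) := by exact_mod_cast hi.1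
        omega
      · omega
    rw [if_pos hcond] at hB
    have h1 := cardA_le_one ν t
    omega

lemma DD_pos_imp (ν : Ptn) {t : ℤ} (h : 0 < DD ν t) :
    ∃ i ∈ range ν.bnd, aP ν i = t := by
  have h0 : 0 < ((range ν.bnd).filter (fun i : ℕ => aP ν i = t)).card := by
    by_contra hc
    have : ((range ν.bnd).filter (fun i : ℕ => aP ν i = t)).card = 0 := by omega
    have h3 : (0 : ℤ) ≤ (((range ν.bnd).filter (fun i : ℕ => -((i : ℤ) + 1) = t)).card : ℤ) :=
      Int.natCast_nonneg _
    unfold DD at h; omega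
  obtain ⟨i, hi⟩ := Finset.card_pos.1 h0
  simp only [mem_filter] at hi
  exact ⟨i, hi.1, hi.2⟩

lemma DD_neg_imp (ν : Ptn) {t : ℤ} (h : DD ν t < 0) :
    (-(ν.bnd : ℤ) ≤ t ∧ t ≤ -1) ∧ ∀ i ∈ range ν.bnd, aP ν i ≠ t := by
  have hB := cardB_eq ν.bnd t
  have hA : (0 : ℤ) ≤ (((range ν.bnd).filter (fun i : ℕ => aP ν i = t)).card : ℤ) :=
    Int.natCast_nonneg _
  have hcond : -(ν.bnd : ℤ) ≤ t ∧ t ≤ -1 := by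
    by_contra hc
    rw [if_neg hc] at hB
    unfold DD at h; omega
  refine ⟨hcond, fun i hi hip => ?_⟩
  rw [if_pos hcond] at hB
  have : 0 < ((range ν.bnd).filter (fun i : ℕ => aP ν i = t)).card :=
    Finset.card_pos.2 ⟨i, Finset.mem_filter.2 ⟨hi, hip⟩⟩
  unfold DD at h; omega

/-! ### The counting lemma for `mm` when `k ≤ 0` -/

lemma range_filter_le_card (n : ℕ) {k : ℤ} (hk : k ≤ 0) :
    ((range n).filter (fun i : ℕ => -(i : ℤ) ≤ k)).card = ((n : ℤ) + k).toNat := by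
  have : (range n).filter (fun i : ℕ => -(i : ℤ) ≤ k) = Finset.Ico (-k).toNat n := by
    ext i
    simp only [mem_filter, mem_range, Finset.mem_Ico]
    omega
  rw [this, Nat.card_Ico]
  omega

lemma W_card (μ : Ptn) {k : ℤ} (hk : k ≤ 0) :
    ((Finset.Icc (-(μ.bnd : ℤ)) (k - 1)).filter
        (fun t : ℤ => ∀ i ∈ range μ.bnd, aP μ i ≠ t)).card = mm μ k := by
  -- the elements of the Icc that ARE values of aP
  have h1 : (Finset.Icc (-(μ.bnd : ℤ)) (k - 1)).filter (fun t : ℤ => ∃ i ∈ range μ.bnd, aP μ i = t)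
      = ((range μ.bnd).filter (fun i : ℕ => aP μ i < k)).image (aP μ) := by
    ext t
    simp only [mem_filter, Finset.mem_Icc, mem_image, mem_range]
    constructor
    · rintro ⟨⟨hl, hr⟩, i, hi, hit⟩
      exact ⟨i, ⟨hi, by omega⟩, hit⟩
    · rintro ⟨i, ⟨hi, hik⟩, hit⟩
      have hge := aP_ge μ i
      have : (i : ℤ) + 1 ≤ (μ.bnd : ℤ) := by exact_mod_cast hi
      exact ⟨⟨by omega, by omega⟩, i, hi, hit⟩
  have h2 : (((range μ.bnd).filter (fun i : ℕ => aP μ i < k)).image (aP μ)).card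
      = ((range μ.bnd).filter (fun i : ℕ => aP μ i < k)).card :=
    Finset.card_image_of_injOn (fun i _ j _ h => aP_inj μ h)
  have h3 := Finset.card_filter_add_card_filter_not
    (s := Finset.Icc (-(μ.bnd : ℤ)) (k - 1)) (p := fun t => ∃ i ∈ range μ.bnd, aP μ i = t)
  have h4 : (Finset.Icc (-(μ.bnd : ℤ)) (k - 1)).card = ((μ.bnd : ℤ) + k).toNat := by
    rw [Int.card_Icc]
    omega
  -- identify the complement filter with the W set
  have h5 : (Finset.Icc (-(μ.bnd : ℤ)) (k - 1)).filter (fun t : ℤ => ¬∃ i ∈ range μ.bnd, aP μ i = t)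
      = (Finset.Icc (-(μ.bnd : ℤ)) (k - 1)).filter (fun t : ℤ => ∀ i ∈ range μ.bnd, aP μ i ≠ t) := by
    apply Finset.filter_congr
    intro t _
    simp
  -- now the mm side
  have h6 : ((range μ.bnd).filter (fun i : ℕ => -(i : ℤ) ≤ k)).card
      = mm μ k + ((range μ.bnd).filter (fun i : ℕ => aP μ i < k)).card := by
    have hsplit := Finset.card_filter_add_card_filter_not
      (s := (range μ.bnd).filter (fun i : ℕ => -(i : ℤ) ≤ k)) (p := fun i => k ≤ aP μ i)
    have e1 : ((range μ.bnd).filter (fun i : ℕ => -(i : ℤ) ≤ k)).filter (fun i : ℕ => k ≤ aP μ i)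
        = (range μ.bnd).filter (fun i : ℕ => -(i : ℤ) ≤ k ∧ k ≤ aP μ i) := by
      rw [Finset.filter_filter]
    have e2 : ((range μ.bnd).filter (fun i : ℕ => -(i : ℤ) ≤ k)).filter (fun i : ℕ => ¬k ≤ aP μ i)
        = (range μ.bnd).filter (fun i : ℕ => aP μ i < k) := by
      rw [Finset.filter_filter]
      ext i
      simp only [mem_filter, mem_range]
      have hge := aP_ge μ i
      omega
    rw [e1, e2] at hsplit
    unfold mm
    omega
  rw [range_filter_le_card μ.bnd hk] at h6
  rw [h5, h1, h2] at h3
  rw [h4] at h3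
  omega

end
end CkAux
namespace CkAux
open Finset
open scoped LaurentSeries
noncomputable section

local notation "XX" => (RatFunc.X : RatFunc ℚ)

/-! ### Laurent series coefficients -/

def ck (F : RatFunc ℚ) (k : ℤ) : ℚ := ((F : LaurentSeries ℚ)).coeff k

lemma ck_add (F G : RatFunc ℚ) (k : ℤ) : ck (F + G) k = ck F k + ck G k := by
  unfold ck; rw [map_add, HahnSeries.coeff_add]

lemma ck_sub (F G : RatFunc ℚ) (k : ℤ) : ck (F - G) k = ck F k - ck G k := by
  unfold ck; rw [map_sub, HahnSeries.coeff_sub]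

lemma ck_zero (k : ℤ) : ck 0 k = 0 := by
  unfold ck; rw [map_zero, HahnSeries.coeff_zero]

lemma ck_sum {α : Type*} (s : Finset α) (f : α → RatFunc ℚ) (k : ℤ) :
    ck (∑ i ∈ s, f i) k = ∑ i ∈ s, ck (f i) k := by
  classical
  induction s using Finset.cons_induction with
  | empty => simp [ck_zero]
  | cons a s ha ih => rw [Finset.sum_cons, Finset.sum_cons, ck_add, ih]

lemma coe_X_zpow (z : ℤ) :
    ((RatFunc.X ^ z : RatFunc ℚ) : LaurentSeries ℚ) = HahnSeries.single z 1 := by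
  have h : ((RatFunc.X ^ z : RatFunc ℚ) : LaurentSeries ℚ)
      = ((RatFunc.X ^ z : RatFunc ℚ) : LaurentSeries ℚ) := rfl
  rw [h, map_zpow₀]
  show ((RatFunc.X : RatFunc ℚ) : LaurentSeries ℚ) ^ z = _
  rw [RatFunc.coe_X]
  exact (RatFunc.single_zpow z).symm

lemma ck_X_zpow (z k : ℤ) : ck (XX ^ z) k = if z = k then 1 else 0 := by
  unfold ck
  rw [coe_X_zpow, HahnSeries.coeff_single]
  simp [eq_comm]

lemma ck_zpow_mul (z : ℤ) (F : RatFunc ℚ) (k : ℤ) :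
    ck (XX ^ z * F) k = ck F (k - z) := by
  unfold ck
  rw [map_mul, coe_X_zpow]
  have := HahnSeries.coeff_single_mul_add (b := z) (a := k - z) (r := (1 : ℚ))
    (x := ((F : RatFunc ℚ) : LaurentSeries ℚ))
  rw [show k - z + z = k by ring] at this
  rw [this, one_mul]

/-! ### The rational functions -/

def gg (μ : Ptn) : RatFunc ℚ :=
  ∑ i ∈ range μ.bnd, ((RatFunc.X : RatFunc ℚ) ^ aP μ i - RatFunc.X ^ (-((i : ℤ) + 1)))

lemma fOne_eq_gg (μ : Ptn) : fOne μ = (RatFunc.X / (RatFunc.X - 1)) * gg μ := rfl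

lemma key_row (m i : ℕ) :
    (XX / (XX - 1)) * (XX ^ ((m : ℤ) - ((i : ℤ) + 1)) - XX ^ (-((i : ℤ) + 1)))
      = ∑ j ∈ range m, XX ^ ((j : ℤ) - i) := by
  have e1 : XX ^ ((m : ℤ) - ((i : ℤ) + 1)) - XX ^ (-((i : ℤ) + 1))
      = XX ^ (-((i : ℤ) + 1)) * ((XX : RatFunc ℚ) ^ m - 1) := by
    rw [mul_sub, mul_one, ← zpow_natCast (XX : RatFunc ℚ) m, ← zpow_add₀ hX]
    ring_nf
  rw [e1, ← geom_sum_mul]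
  have e2 : ∀ j : ℕ, XX ^ ((j : ℤ) - i) = XX ^ (-(i : ℤ)) * XX ^ j := by
    intro j
    rw [← zpow_natCast (XX : RatFunc ℚ) j, ← zpow_add₀ hX]
    ring_nf
  rw [sum_congr rfl fun j _ => e2 j, ← mul_sum]
  have e3 : XX ^ (-(i : ℤ)) = XX * XX ^ (-((i : ℤ) + 1)) := by
    rw [show (-(i : ℤ)) = 1 + (-((i : ℤ) + 1)) by ring, zpow_add₀ hX, zpow_one]
  rw [e3, div_mul_eq_mul_div, div_eq_iff hX1]
  ring

lemma fOne_cells (μ : Ptn) :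
    fOne μ = ∑ i ∈ range μ.bnd, ∑ j ∈ range (μ.parts i), XX ^ ((j : ℤ) - i) := by
  rw [fOne_eq_gg, gg, mul_sum]
  exact sum_congr rfl fun i _ => key_row (μ.parts i) i

lemma fTwo_eq (μ ν : Ptn) :
    fTwo μ ν = RatFunc.X * gg μ * gg ν + fOne μ + fOne ν := by
  rw [fTwo, fOne_eq_gg μ, fOne_eq_gg ν]
  have key : ∀ A B : RatFunc ℚ,
      (XX - 2 + XX⁻¹) * ((XX / (XX - 1)) * A) * ((XX / (XX - 1)) * B) = XX * A * B := by
    intro A B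
    have e : XX - 2 + XX⁻¹ = (XX - 1) * (XX - 1) / XX := by
      rw [eq_div_iff hX, add_mul, sub_mul, inv_mul_cancel₀ hX]
      ring
    rw [e]
    have h3 : XX - XX ^ 2 * 2 + XX ^ 3 ≠ 0 := by
      have h4 : XX - XX ^ 2 * 2 + XX ^ 3 = XX * ((XX - 1) * (XX - 1)) := by ring
      rw [h4]
      exact mul_ne_zero hX (mul_ne_zero hX1 hX1)
    field_simp [h3]
    linear_combination (RatFunc.X : RatFunc ℚ) * A * B * mul_inv_cancel₀ hX1
  rw [key]

/-! ### Coefficient formulas -/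

lemma ck_fOne (μ : Ptn) (k : ℤ) : ck (fOne μ) k = (mm μ k : ℚ) := by
  rw [fOne_cells, ck_sum]
  have h1 : ∀ i ∈ range μ.bnd,
      ck (∑ j ∈ range (μ.parts i), XX ^ ((j : ℤ) - i)) k
        = (if -(i : ℤ) ≤ k ∧ k ≤ aP μ i then (1 : ℚ) else 0) := by
    intro i _
    rw [ck_sum]
    have h2 : ∀ j ∈ range (μ.parts i), ck (XX ^ ((j : ℤ) - i)) k
        = if (j : ℤ) - i = k then (1 : ℚ) else 0 := fun j _ => ck_X_zpow _ _
    rw [sum_congr rfl h2, Finset.sum_boole]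
    have h3 : ((range (μ.parts i)).filter (fun j : ℕ => (j : ℤ) - i = k)).card
        = if -(i : ℤ) ≤ k ∧ k ≤ aP μ i then 1 else 0 := by
      unfold aP
      split_ifs with h
      · have : (range (μ.parts i)).filter (fun j : ℕ => (j : ℤ) - i = k) = {(k + i).toNat} := by
          ext j
          simp only [mem_filter, mem_range, mem_singleton]
          omega
        rw [this, card_singleton]
      · have : (range (μ.parts i)).filter (fun j : ℕ => (j : ℤ) - i = k) = ∅ := by
          ext j
          simp only [mem_filter, mem_range, notMem_empty, iff_false, not_and]
          intro hj
          omega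
        rw [this, card_empty]
    rw [h3]
    split_ifs <;> norm_num
  rw [sum_congr rfl h1, Finset.sum_boole, mm]

lemma ck_gg (ν : Ptn) (t : ℤ) : ck (gg ν) t = (DD ν t : ℚ) := by
  rw [gg, ck_sum]
  have h1 : ∀ i ∈ range ν.bnd,
      ck (XX ^ aP ν i - XX ^ (-((i : ℤ) + 1))) t
        = (if aP ν i = t then (1 : ℚ) else 0) - (if -((i : ℤ) + 1) = t then (1 : ℚ) else 0) := by
    intro i _
    rw [ck_sub, ck_X_zpow, ck_X_zpow]
  rw [sum_congr rfl h1, Finset.sum_sub_distrib, Finset.sum_boole, Finset.sum_boole, DD]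
  push_cast
  ring

lemma ck_prod (μ ν : Ptn) (k : ℤ) :
    ck (RatFunc.X * gg μ * gg ν) k
      = ∑ i ∈ range μ.bnd, ((DD ν (k - 1 - aP μ i) : ℚ) - (DD ν (k + i) : ℚ)) := by
  have hexp : RatFunc.X * gg μ * gg ν
      = ∑ i ∈ range μ.bnd,
          (XX ^ (aP μ i + 1) * gg ν - XX ^ (-((i : ℤ) + 1) + 1) * gg ν) := by
    rw [gg, mul_sum, sum_mul]
    refine sum_congr rfl fun i _ => ?_
    have hx1 : XX ^ (aP μ i + 1) = XX ^ aP μ i * XX := by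
      rw [zpow_add₀ hX, zpow_one]
    have hx2 : XX ^ (-((i : ℤ) + 1) + 1) = XX ^ (-((i : ℤ) + 1)) * XX := by
      rw [zpow_add₀ hX, zpow_one]
    rw [hx1, hx2]
    ring
  rw [hexp, ck_sum]
  refine sum_congr rfl fun i _ => ?_
  rw [ck_sub, ck_zpow_mul, ck_zpow_mul, ck_gg, ck_gg]
  congr 2
  · ring
  · ring

lemma Ck_formula (μ ν : Ptn) (k : ℤ) :
    Ck μ ν k
      = ((∑ i ∈ range μ.bnd, (DD ν (k - 1 - aP μ i) - DD ν (k + i))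
          + (mm μ k : ℤ) + (mm ν k : ℤ) : ℤ) : ℚ) := by
  have h : Ck μ ν k = ck (fTwo μ ν) k := rfl
  rw [h, fTwo_eq, ck_add, ck_add, ck_prod, ck_fOne, ck_fOne]
  push_cast
  ring

end
end CkAux
namespace CkAux
open Finset

/-! ### The main inequality -/

theorem main_ineq (μ ν : Ptn) (k : ℤ) :
    0 ≤ ∑ i ∈ range μ.bnd, (DD ν (k - 1 - aP μ i) - DD ν (k + i))
        + (mm μ k : ℤ) + (mm ν k : ℤ) := by
  classical
  -- reindex the second part over the interval [-n, -1]
  have hsum2 : ∑ i ∈ range μ.bnd, DD ν (k + i)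
      = ∑ t ∈ Finset.Icc (-(μ.bnd : ℤ)) (-1), DD ν (k - 1 - t) := by
    refine Finset.sum_nbij' (i := fun i : ℕ => -(i : ℤ) - 1)
      (j := fun t : ℤ => (-t - 1).toNat) ?_ ?_ ?_ ?_ ?_
    · intro a ha
      simp only [mem_range] at ha
      simp only [Finset.mem_Icc]
      omega
    · intro t ht
      simp only [Finset.mem_Icc] at ht
      simp only [mem_range]
      try dsimp only
      omega
    · intro a ha
      try dsimp only
      omega
    · intro t ht
      simp only [Finset.mem_Icc] at ht
      try dsimp only
      omega
    · intro a ha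
      try dsimp only
      congr 1
      omega
  set P := (range μ.bnd).filter (fun i : ℕ => 0 ≤ aP μ i) with hPdef
  set Pc := (range μ.bnd).filter (fun i : ℕ => ¬0 ≤ aP μ i) with hPcdef
  set img := Pc.image (aP μ) with himgdef
  have hsplit : ∑ i ∈ range μ.bnd, DD ν (k - 1 - aP μ i)
      = ∑ i ∈ P, DD ν (k - 1 - aP μ i) + ∑ i ∈ Pc, DD ν (k - 1 - aP μ i) :=
    (Finset.sum_filter_add_sum_filter_not _ _ _).symm
  have himg : ∑ i ∈ Pc, DD ν (k - 1 - aP μ i) = ∑ t ∈ img, DD ν (k - 1 - t) := by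
    rw [himgdef]
    rw [Finset.sum_image (fun x _ y _ h => aP_inj μ h)]
  have hsub : img ⊆ Finset.Icc (-(μ.bnd : ℤ)) (-1) := by
    intro t ht
    rw [himgdef] at ht
    simp only [Finset.mem_image, hPcdef, mem_filter, mem_range] at ht
    obtain ⟨i, ⟨hi, hneg⟩, rfl⟩ := ht
    have h1 := aP_ge μ i
    have h2 : (i : ℤ) + 1 ≤ (μ.bnd : ℤ) := by exact_mod_cast hi
    simp only [Finset.mem_Icc]
    omega
  have hsdiff := Finset.sum_sdiff (f := fun t : ℤ => DD ν (k - 1 - t)) hsub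
  have hTotal : ∑ i ∈ range μ.bnd, (DD ν (k - 1 - aP μ i) - DD ν (k + i))
      = (∑ i ∈ P, DD ν (k - 1 - aP μ i))
        - ∑ t ∈ Finset.Icc (-(μ.bnd : ℤ)) (-1) \ img, DD ν (k - 1 - t) := by
    rw [Finset.sum_sub_distrib, hsum2, hsplit, himg]
    linarith [hsdiff]
  set Q1 := P.filter (fun i : ℕ => DD ν (k - 1 - aP μ i) < 0) with hQ1def
  set Q2 := (Finset.Icc (-(μ.bnd : ℤ)) (-1) \ img).filter
    (fun t : ℤ => 0 < DD ν (k - 1 - t)) with hQ2def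
  have hb1 : -(Q1.card : ℤ) ≤ ∑ i ∈ P, DD ν (k - 1 - aP μ i) := by
    have step : ∑ i ∈ P, (if DD ν (k - 1 - aP μ i) < 0 then (-1 : ℤ) else 0)
        ≤ ∑ i ∈ P, DD ν (k - 1 - aP μ i) := by
      refine Finset.sum_le_sum fun i _ => ?_
      split_ifs with h
      · exact neg_one_le_DD ν _
      · exact not_lt.1 h
    calc -(Q1.card : ℤ) = ∑ i ∈ P, (if DD ν (k - 1 - aP μ i) < 0 then (-1 : ℤ) else 0) := by
          rw [Finset.sum_ite, Finset.sum_const, Finset.sum_const_zero, add_zero, hQ1def]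
          simp
      _ ≤ _ := step
  have hb2 : ∑ t ∈ Finset.Icc (-(μ.bnd : ℤ)) (-1) \ img, DD ν (k - 1 - t) ≤ (Q2.card : ℤ) := by
    have step : ∑ t ∈ Finset.Icc (-(μ.bnd : ℤ)) (-1) \ img, DD ν (k - 1 - t)
        ≤ ∑ t ∈ Finset.Icc (-(μ.bnd : ℤ)) (-1) \ img,
            (if 0 < DD ν (k - 1 - t) then (1 : ℤ) else 0) := by
      refine Finset.sum_le_sum fun t _ => ?_
      split_ifs with h
      · exact DD_le_one ν _
      · exact not_lt.1 h
    calc ∑ t ∈ Finset.Icc (-(μ.bnd : ℤ)) (-1) \ img, DD ν (k - 1 - t) ≤ _ := step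
      _ = (Q2.card : ℤ) := by
          rw [Finset.sum_ite, Finset.sum_const, Finset.sum_const_zero, add_zero, hQ2def]
          simp
  -- the two counting bounds, by cases on the sign of k
  have hcount : (Q1.card : ℤ) + (Q2.card : ℤ) ≤ (mm μ k : ℤ) + (mm ν k : ℤ) := by
    rcases le_or_gt k 0 with hk | hk
    · -- k ≤ 0
      have hq1 : Q1.card ≤ mm ν k := by
        rw [← W_card ν hk]
        have hinj : Set.InjOn (fun i : ℕ => k - 1 - aP μ i) Q1 := by
          intro x _ y _ h
          simp only at h
          exact aP_inj μ (by omega)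
        rw [← Finset.card_image_of_injOn hinj]
        refine Finset.card_le_card ?_
        intro t ht
        simp only [Finset.mem_image, hQ1def, mem_filter, hPdef, mem_range] at ht
        obtain ⟨i, ⟨⟨hi, hpos⟩, hDD⟩, rfl⟩ := ht
        obtain ⟨⟨hl, hr⟩, hnoval⟩ := DD_neg_imp ν hDD
        simp only [mem_filter, Finset.mem_Icc]
        exact ⟨⟨hl, by omega⟩, hnoval⟩
      have hq2 : Q2.card ≤ mm μ k := by
        rw [← W_card μ hk]
        refine Finset.card_le_card ?_
        intro t ht
        simp only [hQ2def, mem_filter, Finset.mem_sdiff, Finset.mem_Icc] at ht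
        obtain ⟨⟨⟨hl, hr⟩, hnot⟩, hDD⟩ := ht
        have hts : 0 ≤ k - 1 - t := by
          by_contra hc
          exact absurd (DD_nonpos ν (t := k - 1 - t) (by omega)) (by omega)
        simp only [mem_filter, Finset.mem_Icc]
        refine ⟨⟨hl, by omega⟩, fun i hi hip => ?_⟩
        refine hnot ?_
        have hmem : i ∈ Pc := by
          rw [hPcdef]
          exact mem_filter.2 ⟨hi, by rw [hip]; omega⟩
        rw [himgdef]
        exact hip ▸ Finset.mem_image_of_mem (aP μ) hmem
      omega
    · -- 0 < k
      have hq1 : Q1.card ≤ mm μ k := by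
        refine Finset.card_le_card ?_
        intro i hi
        simp only [hQ1def, mem_filter, hPdef, mem_range] at hi
        obtain ⟨⟨hi1, hi2⟩, hDD⟩ := hi
        have hge : k ≤ aP μ i := by
          by_contra hc
          exact absurd (DD_nonneg ν (t := k - 1 - aP μ i) (by omega)) (by omega)
        simp only [mm, mem_filter, mem_range]
        exact ⟨hi1, by omega, hge⟩
      have hq2 : Q2.card ≤ mm ν k := by
        have hinj : Set.InjOn (fun t : ℤ => k - 1 - t) Q2 := fun x _ y _ h => by simp only at h; omega
        rw [← Finset.card_image_of_injOn hinj]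
        have himval : Q2.image (fun t : ℤ => k - 1 - t)
            ⊆ ((range ν.bnd).filter (fun i : ℕ => -(i : ℤ) ≤ k ∧ k ≤ aP ν i)).image (aP ν) := by
          intro s hs
          simp only [Finset.mem_image, hQ2def, mem_filter, Finset.mem_sdiff, Finset.mem_Icc] at hs
          obtain ⟨t, ⟨⟨⟨hl, hr⟩, _⟩, hDD⟩, rfl⟩ := hs
          obtain ⟨i, hi, hival⟩ := DD_pos_imp ν hDD
          simp only [Finset.mem_image, mem_filter]
          refine ⟨i, ⟨hi, by
            simp only [mem_range] at hi
            constructor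
            · omega
            · omega⟩, hival⟩
        calc (Q2.image (fun t : ℤ => k - 1 - t)).card
            ≤ (((range ν.bnd).filter
                (fun i : ℕ => -(i : ℤ) ≤ k ∧ k ≤ aP ν i)).image (aP ν)).card :=
              Finset.card_le_card himval
          _ = mm ν k := by
              rw [Finset.card_image_of_injOn (fun x _ y _ h => aP_inj ν h), mm]
      omega
  linarith [hb1, hb2, hTotal, hcount]

end CkAux

/-- All the coefficients `C_k(μ,ν)` of the Laurent polynomial `f_{μ,ν}(q)`
are nonnegative integers. -/
theorem Ck_nonneg_integer (μ ν : Ptn) (k : ℤ) : ∃ n : ℕ, Ck μ ν k = (n : ℚ) := by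
  classical
  refine ⟨(∑ i ∈ Finset.range μ.bnd,
      (CkAux.DD ν (k - 1 - CkAux.aP μ i) - CkAux.DD ν (k + i))
      + (CkAux.mm μ k : ℤ) + (CkAux.mm ν k : ℤ)).toNat, ?_⟩
  rw [CkAux.Ck_formula]
  norm_cast
  exact (Int.toNat_of_nonneg (CkAux.main_ineq μ ν k)).symm
end
end

section
/- For partitions λ_1, λ_3, the identity ∏_{k∈ℤ}(1 − Q^{−1} q^k)^{C_k(λ_1,λ_3)} = (−Q)^{−|λ_1|−|λ_3|} q^{(κ(λ_1)+κ(λ_3))/2} ∏_{k∈ℤ}(1 − Q q^k)^{C_k(λ_1^t, λ_3^t)} holds as rational functions in q^{1/2} and Q. -/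
open scoped LaurentSeries
noncomputable section

/-- The field `ℚ(t, Q)` of rational functions in `t = q^{1/2}` and `Q`. -/
abbrev F2 : Type := RatFunc (RatFunc ℚ)

/-- The variable `Q`. -/
def QQ : F2 := RatFunc.X

/-- The variable `t = q^{1/2}` (so `q = t^2`). -/
def tt : F2 := RatFunc.C (RatFunc.X)

namespace FlopAux

/-- Cells of a partition. -/
def Cl (μ : Ptn) : Finset (ℕ × ℕ) := cellsF μ zeroP

/-- Content of a cell. -/
def cnt (c : ℕ × ℕ) : ℤ := (c.2 : ℤ) - (c.1 : ℤ)

lemma mem_Cl {μ : Ptn} {c : ℕ × ℕ} : c ∈ Cl μ ↔ c.2 < μ.parts c.1 := by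
  constructor
  · intro h
    simp only [Cl, cellsF, Finset.mem_filter] at h
    exact h.2.2
  · intro h
    have h1 : c.1 < μ.bnd := by
      by_contra hb
      have := μ.bnd_spec c.1 (by omega)
      omega
    have h2 : c.2 < μ.parts 0 := lt_of_lt_of_le h (μ.anti (Nat.zero_le c.1))
    simp only [Cl, cellsF, Finset.mem_filter, Finset.mem_product, Finset.mem_range]
    exact ⟨⟨h1, h2⟩, Nat.zero_le _, h⟩

lemma conj_lt_iff (μ : Ptn) (i j : ℕ) : j < (pconj μ).parts i ↔ i < μ.parts j := by
  show j < ((Finset.range μ.bnd).filter (fun a => i + 1 ≤ μ.parts a)).card ↔ _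
  constructor
  · intro h
    by_contra hc
    have hsub : (Finset.range μ.bnd).filter (fun a => i + 1 ≤ μ.parts a) ⊆ Finset.range j := by
      intro a ha
      simp only [Finset.mem_filter, Finset.mem_range] at ha ⊢
      by_contra haj
      have := μ.anti (show j ≤ a by omega)
      omega
    have := Finset.card_le_card hsub
    simp only [Finset.card_range] at this
    omega
  · intro h
    have hsub : Finset.range (j+1) ⊆ (Finset.range μ.bnd).filter (fun a => i + 1 ≤ μ.parts a) := by
      intro a ha
      simp only [Finset.mem_range] at ha
      have h1 : i + 1 ≤ μ.parts a := le_trans (by omega) (μ.anti (show a ≤ j by omega))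
      have h2 : a < μ.bnd := by
        by_contra hb
        have := μ.bnd_spec a (by omega)
        omega
      simp only [Finset.mem_filter, Finset.mem_range]
      exact ⟨h2, h1⟩
    have := Finset.card_le_card hsub
    simp only [Finset.card_range] at this
    omega

lemma mem_Cl_conj {μ : Ptn} {c : ℕ × ℕ} : c ∈ Cl (pconj μ) ↔ c.swap ∈ Cl μ := by
  rw [mem_Cl, mem_Cl, conj_lt_iff]
  rfl

lemma sum_Cl {M : Type*} [AddCommMonoid M] (μ : Ptn) (g : ℕ × ℕ → M) :
    ∑ c ∈ Cl μ, g c = ∑ i ∈ Finset.range μ.bnd, ∑ j ∈ Finset.range (μ.parts i), g (i, j) := by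
  rw [Cl, cellsF, Finset.sum_filter, Finset.sum_product]
  refine Finset.sum_congr rfl fun i hi => ?_
  simp only [Finset.mem_range] at hi
  have hle : μ.parts i ≤ μ.parts 0 := μ.anti (Nat.zero_le i)
  rw [← Finset.sum_filter]
  congr 1
  ext j
  simp only [Finset.mem_filter, Finset.mem_range]
  constructor
  · rintro ⟨_, _, h⟩; exact h
  · intro h; exact ⟨by omega, Nat.zero_le _, h⟩

lemma card_Cl (μ : Ptn) : ((Cl μ).card : ℤ) = (psize μ : ℤ) := by
  have : (Cl μ).card = ∑ c ∈ Cl μ, 1 := (Finset.card_eq_sum_ones _)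
  rw [this, sum_Cl]
  simp [psize]

lemma sum_range_two_mul (m : ℕ) : ∑ j ∈ Finset.range m, (2 * (j : ℤ)) = m * (m - 1) := by
  induction m with
  | zero => simp
  | succ n ih => rw [Finset.sum_range_succ, ih]; push_cast; ring

lemma kappa_eq (μ : Ptn) : kappa μ = ∑ c ∈ Cl μ, 2 * cnt c := by
  rw [sum_Cl]
  have hrow : ∀ i : ℕ, ∑ j ∈ Finset.range (μ.parts i), 2 * cnt (i, j)
      = (μ.parts i : ℤ) * ((μ.parts i : ℤ) - 2 * (i + 1)) + (μ.parts i : ℤ) := by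
    intro i
    have : ∀ j ∈ Finset.range (μ.parts i), 2 * cnt (i, j) = 2 * (j:ℤ) - 2 * (i:ℤ) := by
      intro j _; simp [cnt]; ring
    rw [Finset.sum_congr rfl this, Finset.sum_sub_distrib, sum_range_two_mul,
      Finset.sum_const, Finset.card_range]
    ring
  rw [Finset.sum_congr rfl (fun i _ => hrow i), Finset.sum_add_distrib]
  simp only [kappa, psize]
  push_cast
  ring

end FlopAux
namespace FlopAux

lemma X_sub_one_ne : (RatFunc.X : RatFunc ℚ) - 1 ≠ 0 := by
  intro h
  have h2 : (RatFunc.X : RatFunc ℚ) = 1 := by linear_combination h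
  have := RatFunc.intDegree_X (K := ℚ)
  rw [h2] at this
  simp [RatFunc.intDegree_one] at this

lemma X_ne_zero : (RatFunc.X : RatFunc ℚ) ≠ 0 := by
  intro h
  have := RatFunc.intDegree_X (K := ℚ)
  rw [h] at this
  simp [RatFunc.intDegree_zero] at this

lemma fOne_row (i m : ℕ) :
    (RatFunc.X / (RatFunc.X - 1) : RatFunc ℚ) *
      ((RatFunc.X : RatFunc ℚ) ^ ((m : ℤ) - (i + 1)) - RatFunc.X ^ (-((i : ℤ) + 1)))
    = ∑ j ∈ Finset.range m, (RatFunc.X : RatFunc ℚ) ^ ((j : ℤ) - i) := by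
  have hX := X_ne_zero
  have h1 : (RatFunc.X : RatFunc ℚ) ^ ((m : ℤ) - (i + 1))
      = RatFunc.X ^ (-((i : ℤ) + 1)) * RatFunc.X ^ (m : ℕ) := by
    rw [← zpow_natCast (RatFunc.X : RatFunc ℚ) m, ← zpow_add₀ hX]
    ring_nf
  have hgeom : (RatFunc.X : RatFunc ℚ) ^ (m : ℕ) - 1
      = (∑ j ∈ Finset.range m, (RatFunc.X : RatFunc ℚ) ^ j) * (RatFunc.X - 1) :=
    (geom_sum_mul (RatFunc.X : RatFunc ℚ) m).symm
  rw [h1]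
  have : (RatFunc.X : RatFunc ℚ) ^ (-((i : ℤ) + 1)) * RatFunc.X ^ (m:ℕ)
      - RatFunc.X ^ (-((i : ℤ) + 1))
      = RatFunc.X ^ (-((i : ℤ) + 1)) * (RatFunc.X ^ (m:ℕ) - 1) := by ring
  rw [this, hgeom]
  rw [div_mul_eq_mul_div, div_eq_iff X_sub_one_ne]
  have hterm : ∀ j : ℕ, (RatFunc.X : RatFunc ℚ) ^ ((j : ℤ) - i)
      = RatFunc.X * RatFunc.X ^ (-((i : ℤ) + 1)) * RatFunc.X ^ j := by
    intro j
    have he : ((j : ℤ) - i) = 1 + (-((i : ℤ) + 1)) + j := by ring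
    rw [he, zpow_add₀ hX, zpow_add₀ hX, zpow_one, zpow_natCast]
  have hms : (∑ j ∈ Finset.range m,
        RatFunc.X * RatFunc.X ^ (-((i : ℤ) + 1)) * (RatFunc.X : RatFunc ℚ) ^ j)
      = RatFunc.X * RatFunc.X ^ (-((i : ℤ) + 1)) * ∑ j ∈ Finset.range m, RatFunc.X ^ j := by
    rw [Finset.mul_sum]
  rw [Finset.sum_congr rfl fun j _ => hterm j, hms]
  ring

lemma fOne_eq (μ : Ptn) : fOne μ = ∑ c ∈ Cl μ, (RatFunc.X : RatFunc ℚ) ^ (cnt c) := by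
  rw [fOne, Finset.mul_sum, sum_Cl]
  exact Finset.sum_congr rfl fun i _ => fOne_row i (μ.parts i)

end FlopAux
namespace FlopAux

/-- Index type for the monomials of `fTwo`. -/
abbrev Idx : Type := (((ℕ × ℕ) × (ℕ × ℕ)) × Fin 3) ⊕ ((ℕ × ℕ) ⊕ (ℕ × ℕ))

def bigS (μ ν : Ptn) : Finset Idx :=
  ((Cl μ ×ˢ Cl ν) ×ˢ (Finset.univ : Finset (Fin 3))).disjSum ((Cl μ).disjSum (Cl ν))

def ww : Idx → ℤ
  | .inl (_, t) => if t = 1 then -2 else 1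
  | .inr _ => 1

def ee : Idx → ℤ
  | .inl (p, t) => cnt p.1 + cnt p.2 + 1 - (t : ℕ)
  | .inr (.inl c) => cnt c
  | .inr (.inr c) => cnt c

lemma fTwo_eq (μ ν : Ptn) :
    fTwo μ ν = ∑ s ∈ bigS μ ν, RatFunc.C ((ww s : ℚ)) * (RatFunc.X : RatFunc ℚ) ^ (ee s) := by
  have hX := X_ne_zero
  rw [bigS, Finset.sum_disjSum, Finset.sum_disjSum]
  have hs1 : ∑ c ∈ Cl μ, RatFunc.C ((ww (.inr (.inl c)) : ℚ))
        * (RatFunc.X : RatFunc ℚ) ^ (ee (.inr (.inl c))) = fOne μ := by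
    rw [fOne_eq]; refine Finset.sum_congr rfl fun c _ => ?_; simp [ww, ee]
  have hs2 : ∑ c ∈ Cl ν, RatFunc.C ((ww (.inr (.inr c)) : ℚ))
        * (RatFunc.X : RatFunc ℚ) ^ (ee (.inr (.inr c))) = fOne ν := by
    rw [fOne_eq]; refine Finset.sum_congr rfl fun c _ => ?_; simp [ww, ee]
  have hpair : ∑ p ∈ (Cl μ ×ˢ Cl ν) ×ˢ (Finset.univ : Finset (Fin 3)),
      RatFunc.C ((ww (.inl p) : ℚ)) * (RatFunc.X : RatFunc ℚ) ^ (ee (.inl p))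
      = (RatFunc.X - 2 + RatFunc.X⁻¹) * fOne μ * fOne ν := by
    rw [Finset.sum_product]
    have h1 : ∀ p : (ℕ × ℕ) × (ℕ × ℕ), ∑ t : Fin 3,
        RatFunc.C ((ww (.inl (p, t)) : ℚ)) * (RatFunc.X : RatFunc ℚ) ^ (ee (.inl (p, t)))
        = (RatFunc.X - 2 + RatFunc.X⁻¹) * (RatFunc.X ^ cnt p.1 * RatFunc.X ^ cnt p.2) := by
      intro p
      rw [Fin.sum_univ_three]
      have w0 : ww (.inl (p, (0 : Fin 3))) = 1 := rfl
      have w1 : ww (.inl (p, (1 : Fin 3))) = -2 := rfl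
      have w2 : ww (.inl (p, (2 : Fin 3))) = 1 := rfl
      have E : ∀ t : Fin 3, ee (.inl (p, t)) = cnt p.1 + cnt p.2 + 1 - ((t : ℕ) : ℤ) :=
        fun _ => rfl
      rw [w0, w1, w2, E 0, E 1, E 2]
      have e0 : cnt p.1 + cnt p.2 + 1 - (((0 : Fin 3) : ℕ) : ℤ) = (cnt p.1 + cnt p.2) + 1 := by
        norm_num
      have e1 : cnt p.1 + cnt p.2 + 1 - (((1 : Fin 3) : ℕ) : ℤ) = cnt p.1 + cnt p.2 := by
        norm_num
      have e2 : cnt p.1 + cnt p.2 + 1 - (((2 : Fin 3) : ℕ) : ℤ) = (cnt p.1 + cnt p.2) - 1 := by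
        norm_num; ring
      rw [e0, e1, e2]
      have h3 : (RatFunc.X : RatFunc ℚ) ^ ((cnt p.1 + cnt p.2) + 1)
          = RatFunc.X ^ cnt p.1 * RatFunc.X ^ cnt p.2 * RatFunc.X := by
        rw [zpow_add₀ hX, zpow_add₀ hX, zpow_one]
      have h4 : (RatFunc.X : RatFunc ℚ) ^ ((cnt p.1 + cnt p.2) - 1)
          = RatFunc.X ^ cnt p.1 * RatFunc.X ^ cnt p.2 * RatFunc.X⁻¹ := by
        rw [sub_eq_add_neg, zpow_add₀ hX, zpow_add₀ hX, zpow_neg_one]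
      have h5 : (RatFunc.X : RatFunc ℚ) ^ (cnt p.1 + cnt p.2)
          = RatFunc.X ^ cnt p.1 * RatFunc.X ^ cnt p.2 := zpow_add₀ hX _ _
      rw [h3, h4, h5]
      push_cast
      rw [map_one, map_neg, map_ofNat]
      ring
    rw [Finset.sum_congr rfl fun p _ => h1 p, ← Finset.mul_sum, fOne_eq, fOne_eq, mul_assoc]
    congr 1
    rw [Finset.sum_mul_sum, Finset.sum_product]
  rw [hs1, hs2, hpair, fTwo, add_assoc]

lemma coe_X_zpow (e : ℤ) :
    ((RatFunc.X ^ e : RatFunc ℚ) : LaurentSeries ℚ) = HahnSeries.single e 1 := by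
  rw [map_zpow₀, RatFunc.coe_X, ← RatFunc.single_zpow]

def ind (k e : ℤ) : ℤ := if k = e then 1 else 0

def DD (μ ν : Ptn) (k : ℤ) : ℤ := ∑ s ∈ bigS μ ν, ww s * ind k (ee s)

lemma Ck_eq (μ ν : Ptn) (k : ℤ) : Ck μ ν k = ((DD μ ν k : ℤ) : ℚ) := by
  rw [Ck, fTwo_eq, map_sum]
  have hterm : ∀ s : Idx,
        ((RatFunc.C ((ww s : ℚ)) * (RatFunc.X : RatFunc ℚ) ^ (ee s) : RatFunc ℚ) : LaurentSeries ℚ)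
      = HahnSeries.single (ee s) ((ww s : ℚ)) := by
    intro s
    rw [map_mul, (by simp : ((RatFunc.C (ww s : ℚ) : RatFunc ℚ) : LaurentSeries ℚ)
        = HahnSeries.C (ww s : ℚ)), coe_X_zpow, HahnSeries.C_apply,
      HahnSeries.single_mul_single, zero_add, mul_one]
  rw [Finset.sum_congr rfl fun s _ => hterm s]
  have hc : (∑ s ∈ bigS μ ν, HahnSeries.single (ee s) ((ww s : ℚ))).coeff k
      = ∑ s ∈ bigS μ ν, (HahnSeries.single (ee s) ((ww s : ℚ))).coeff k :=
    map_sum (HahnSeries.coeff.addMonoidHom k) _ _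
  rw [hc]
  have hone : ∀ s : Idx, (HahnSeries.single (ee s) ((ww s : ℚ))).coeff k
      = ((ww s * ind k (ee s) : ℤ) : ℚ) := by
    intro s
    rw [HahnSeries.coeff_single]
    by_cases h : k = ee s <;> simp [ind, h]
  rw [Finset.sum_congr rfl fun s _ => hone s, DD]
  push_cast
  rfl

lemma Ck_num (μ ν : Ptn) (k : ℤ) : (Ck μ ν k).num = DD μ ν k := by
  rw [Ck_eq]; exact Rat.num_intCast _

end FlopAux
namespace FlopAux

lemma sum_ww (μ ν : Ptn) : ∑ s ∈ bigS μ ν, ww s = (psize μ : ℤ) + (psize ν : ℤ) := by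
  rw [bigS, Finset.sum_disjSum, Finset.sum_disjSum]
  have hpair : ∑ p ∈ (Cl μ ×ˢ Cl ν) ×ˢ (Finset.univ : Finset (Fin 3)),
      ww (.inl p) = 0 := by
    rw [Finset.sum_product]
    have h1 : ∀ p : (ℕ × ℕ) × (ℕ × ℕ), ∑ t : Fin 3, ww (.inl (p, t)) = 0 := by
      intro p; rw [Fin.sum_univ_three]; rfl
    rw [Finset.sum_congr rfl fun p _ => h1 p, Finset.sum_const, smul_zero]
  have hs1 : ∑ c ∈ Cl μ, ww (Sum.inr (Sum.inl c)) = (psize μ : ℤ) := by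
    rw [← card_Cl]; simp [ww]
  have hs2 : ∑ c ∈ Cl ν, ww (Sum.inr (Sum.inr c)) = (psize ν : ℤ) := by
    rw [← card_Cl]; simp [ww]
  rw [hpair, hs1, hs2, zero_add]

lemma sum_eeww (μ ν : Ptn) : ∑ s ∈ bigS μ ν, 2 * ee s * ww s = kappa μ + kappa ν := by
  rw [bigS, Finset.sum_disjSum, Finset.sum_disjSum]
  have hpair : ∑ p ∈ (Cl μ ×ˢ Cl ν) ×ˢ (Finset.univ : Finset (Fin 3)),
      2 * ee (.inl p) * ww (.inl p) = 0 := by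
    rw [Finset.sum_product]
    have h1 : ∀ p : (ℕ × ℕ) × (ℕ × ℕ),
        ∑ t : Fin 3, 2 * ee (.inl (p, t)) * ww (.inl (p, t)) = 0 := by
      intro p
      rw [Fin.sum_univ_three]
      have E : ∀ t : Fin 3, ee (.inl (p, t)) = cnt p.1 + cnt p.2 + 1 - ((t : ℕ) : ℤ) :=
        fun _ => rfl
      have w0 : ww (.inl (p, (0 : Fin 3))) = 1 := rfl
      have w1 : ww (.inl (p, (1 : Fin 3))) = -2 := rfl
      have w2 : ww (.inl (p, (2 : Fin 3))) = 1 := rfl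
      have t0 : (((0 : Fin 3) : ℕ) : ℤ) = 0 := rfl
      have t1 : (((1 : Fin 3) : ℕ) : ℤ) = 1 := rfl
      have t2 : (((2 : Fin 3) : ℕ) : ℤ) = 2 := rfl
      rw [E 0, E 1, E 2, w0, w1, w2, t0, t1, t2]
      ring
    rw [Finset.sum_congr rfl fun p _ => h1 p, Finset.sum_const, smul_zero]
  have hs1 : ∑ c ∈ Cl μ, 2 * ee (Sum.inr (Sum.inl c)) * ww (Sum.inr (Sum.inl c))
      = kappa μ := by
    rw [kappa_eq]
    refine Finset.sum_congr rfl fun c _ => ?_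
    show 2 * cnt c * 1 = 2 * cnt c
    ring
  have hs2 : ∑ c ∈ Cl ν, 2 * ee (Sum.inr (Sum.inr c)) * ww (Sum.inr (Sum.inr c))
      = kappa ν := by
    rw [kappa_eq]
    refine Finset.sum_congr rfl fun c _ => ?_
    show 2 * cnt c * 1 = 2 * cnt c
    ring
  rw [hpair, hs1, hs2, zero_add]

/-- The conjugation bijection on indices. -/
def phi : Idx → Idx :=
  Sum.map (fun q => ((q.1.1.swap, q.1.2.swap), 2 - q.2)) (Sum.map Prod.swap Prod.swap)

lemma cnt_swap (c : ℕ × ℕ) : cnt c.swap = -(cnt c) := by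
  simp [cnt, Prod.swap]

lemma ee_phi (s : Idx) : ee (phi s) = -(ee s) := by
  rcases s with ⟨⟨a, b⟩, t⟩ | c | c
  · show cnt a.swap + cnt b.swap + 1 - (((2 - t : Fin 3) : ℕ) : ℤ)
      = -(cnt a + cnt b + 1 - ((t : ℕ) : ℤ))
    rw [cnt_swap, cnt_swap]
    have h : (((2 - t : Fin 3) : ℕ) : ℤ) = 2 - ((t : ℕ) : ℤ) := by fin_cases t <;> rfl
    rw [h]; ring
  · show cnt c.swap = -(cnt c); exact cnt_swap c
  · show cnt c.swap = -(cnt c); exact cnt_swap c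

lemma ww_phi (s : Idx) : ww (phi s) = ww s := by
  rcases s with ⟨⟨a, b⟩, t⟩ | c | c
  · show (if 2 - t = 1 then (-2 : ℤ) else 1) = (if t = 1 then (-2 : ℤ) else 1)
    fin_cases t <;> rfl
  · rfl
  · rfl

lemma phi_phi (s : Idx) : phi (phi s) = s := by
  rcases s with ⟨⟨a, b⟩, t⟩ | c | c
  · show Sum.inl ((a.swap.swap, b.swap.swap), 2 - (2 - t)) = _
    rw [Prod.swap_swap, Prod.swap_swap]
    congr 1
    congr 1
    fin_cases t <;> rfl
  · simp [phi]
  · simp [phi]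

lemma phi_mem {μ ν : Ptn} {s : Idx} (hs : s ∈ bigS (pconj μ) (pconj ν)) :
    phi s ∈ bigS μ ν := by
  rcases s with ⟨⟨a, b⟩, t⟩ | c | c
  · simp only [phi, Sum.map_inl, Sum.map_inr]
    rw [bigS, Finset.inl_mem_disjSum, Finset.mem_product, Finset.mem_product] at hs ⊢
    exact ⟨⟨mem_Cl_conj.mp hs.1.1, mem_Cl_conj.mp hs.1.2⟩, Finset.mem_univ _⟩
  · simp only [phi, Sum.map_inl, Sum.map_inr]
    rw [bigS, Finset.inr_mem_disjSum, Finset.inl_mem_disjSum] at hs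
    rw [bigS, Finset.inr_mem_disjSum, Finset.inl_mem_disjSum]
    exact mem_Cl_conj.mp hs
  · simp only [phi, Sum.map_inl, Sum.map_inr]
    rw [bigS, Finset.inr_mem_disjSum, Finset.inr_mem_disjSum] at hs
    rw [bigS, Finset.inr_mem_disjSum, Finset.inr_mem_disjSum]
    exact mem_Cl_conj.mp hs

lemma phi_mem' {μ ν : Ptn} {s : Idx} (hs : s ∈ bigS μ ν) :
    phi s ∈ bigS (pconj μ) (pconj ν) := by
  rcases s with ⟨⟨a, b⟩, t⟩ | c | c
  · simp only [phi, Sum.map_inl, Sum.map_inr]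
    rw [bigS, Finset.inl_mem_disjSum, Finset.mem_product, Finset.mem_product] at hs ⊢
    refine ⟨⟨?_, ?_⟩, Finset.mem_univ _⟩
    · rw [mem_Cl_conj, Prod.swap_swap]; exact hs.1.1
    · rw [mem_Cl_conj, Prod.swap_swap]; exact hs.1.2
  · simp only [phi, Sum.map_inl, Sum.map_inr]
    rw [bigS, Finset.inr_mem_disjSum, Finset.inl_mem_disjSum] at hs
    rw [bigS, Finset.inr_mem_disjSum, Finset.inl_mem_disjSum]
    rw [mem_Cl_conj, Prod.swap_swap]; exact hs
  · simp only [phi, Sum.map_inl, Sum.map_inr]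
    rw [bigS, Finset.inr_mem_disjSum, Finset.inr_mem_disjSum] at hs
    rw [bigS, Finset.inr_mem_disjSum, Finset.inr_mem_disjSum]
    rw [mem_Cl_conj, Prod.swap_swap]; exact hs

lemma conj_prod {M : Type*} [CommMonoid M] (μ ν : Ptn) (H : ℤ → ℤ → M) :
    ∏ s ∈ bigS (pconj μ) (pconj ν), H (ee s) (ww s)
      = ∏ s ∈ bigS μ ν, H (-(ee s)) (ww s) := by
  refine Finset.prod_nbij' phi phi (fun s hs => phi_mem hs) (fun s hs => phi_mem' hs)
    (fun s _ => phi_phi s) (fun s _ => phi_phi s) (fun s _ => ?_)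
  rw [ee_phi, ww_phi, neg_neg]

end FlopAux
namespace FlopAux

lemma QQ_ne : QQ ≠ 0 := RatFunc.X_ne_zero

lemma tt_ne : tt ≠ 0 := fun h =>
  RatFunc.X_ne_zero ((RingHom.injective (RatFunc.C (K := RatFunc ℚ)))
    (h.trans (map_zero (RatFunc.C (K := RatFunc ℚ))).symm))

lemma X_ne_C (r : RatFunc ℚ) : (RatFunc.X : F2) ≠ RatFunc.C r := by
  intro h
  have h1 := RatFunc.intDegree_X (K := RatFunc ℚ)
  rw [h, RatFunc.intDegree_C] at h1
  exact zero_ne_one h1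

lemma tt_zpow (k : ℤ) : tt ^ k = RatFunc.C ((RatFunc.X : RatFunc ℚ) ^ k) :=
  (map_zpow₀ (RatFunc.C (K := RatFunc ℚ)) RatFunc.X k).symm

lemma hg1 (k : ℤ) : (1 : F2) - QQ⁻¹ * tt ^ (2 * k) ≠ 0 := by
  intro h
  have h2 : QQ⁻¹ * tt ^ (2 * k) = 1 := by linear_combination -h
  have h3 : QQ = tt ^ (2 * k) := (inv_mul_eq_one₀ QQ_ne).mp h2
  rw [tt_zpow] at h3
  exact X_ne_C _ h3
lemma hg2 (k : ℤ) : (1 : F2) - QQ * tt ^ (2 * k) ≠ 0 := by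
  intro h
  have h2 : QQ * tt ^ (2 * k) = 1 := by linear_combination -h
  have h2' : tt ^ (2 * k) * QQ = 1 := by rw [mul_comm]; exact h2
  have h3 : QQ = (tt ^ (2 * k))⁻¹ := eq_inv_of_mul_eq_one_right h2'
  rw [tt_zpow, ← map_inv₀, ← zpow_neg] at h3
  exact X_ne_C _ h3

lemma zpow_sum' {α : Type*} {a : F2} (ha : a ≠ 0) (S : Finset α) (f : α → ℤ) :
    a ^ (∑ s ∈ S, f s) = ∏ s ∈ S, a ^ f s := by
  classical
  induction S using Finset.cons_induction with
  | empty => simp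
  | cons x S hx ih =>
    rw [Finset.sum_cons, Finset.prod_cons, zpow_add₀ ha, ih]

lemma finprod_eq {α : Type*} (g : ℤ → F2) (hg : ∀ k, g k ≠ 0) (S : Finset α)
    (e w : α → ℤ) :
    (∏ᶠ k : ℤ, g k ^ (∑ s ∈ S, w s * ind k (e s))) = ∏ s ∈ S, g (e s) ^ w s := by
  classical
  have h1 : ∀ k : ℤ, g k ^ (∑ s ∈ S, w s * ind k (e s))
      = ∏ s ∈ S, g k ^ (w s * ind k (e s)) := fun k => zpow_sum' (hg k) S _
  rw [finprod_congr h1]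
  have hsupp : (Function.mulSupport fun k => ∏ s ∈ S, g k ^ (w s * ind k (e s)))
      ⊆ ↑(S.image e) := by
    intro k hk
    rw [Function.mem_mulSupport] at hk
    by_contra hkT
    apply hk
    refine Finset.prod_eq_one fun s hs => ?_
    have : k ≠ e s := by
      intro hke
      exact hkT (by rw [Finset.mem_coe, Finset.mem_image]; exact ⟨s, hs, hke.symm⟩)
    rw [ind, if_neg this, mul_zero, zpow_zero]
  rw [finprod_eq_prod_of_mulSupport_subset _ hsupp, Finset.prod_comm]
  refine Finset.prod_congr rfl fun s hs => ?_
  rw [Finset.prod_eq_single (e s)]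
  · rw [ind, if_pos rfl, mul_one]
  · intro b _ hb
    rw [ind, if_neg hb, mul_zero, zpow_zero]
  · intro hes
    exact absurd (Finset.mem_image_of_mem e hs) hes

lemma flip (k w : ℤ) : ((1 : F2) - QQ⁻¹ * tt ^ (2 * k)) ^ w
    = (-QQ) ^ (-w) * tt ^ (2 * k * w) * (1 - QQ * tt ^ (2 * -k)) ^ w := by
  have hQ := QQ_ne
  have ht : tt ^ (2 * k) ≠ 0 := zpow_ne_zero _ tt_ne
  have hneg : tt ^ (2 * -k) = (tt ^ (2 * k))⁻¹ := by
    rw [show (2 * -k) = -(2 * k) by ring, zpow_neg]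
  have h : (1 : F2) - QQ⁻¹ * tt ^ (2 * k)
      = (-QQ)⁻¹ * tt ^ (2 * k) * (1 - QQ * tt ^ (2 * -k)) := by
    rw [hneg]
    field_simp
    ring
  rw [h, mul_zpow, mul_zpow, inv_zpow, ← zpow_neg, ← zpow_mul]

end FlopAux
open FlopAux in
/-- For partitions `λ₁, λ₃`,
`∏_{k∈ℤ} (1 - Q⁻¹ q^k)^{C_k(λ₁,λ₃)}
  = (-Q)^{-|λ₁|-|λ₃|} q^{(κ(λ₁)+κ(λ₃))/2} ∏_{k∈ℤ} (1 - Q q^k)^{C_k(λ₁^t,λ₃^t)}`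
as rational functions in `q^{1/2}` and `Q` (here `q = t²`, and the integer exponents
`C_k` are extracted via `Rat.num`, the `C_k` being integers). -/
theorem flop_product_identity (l1 l3 : Ptn) :
    (∏ᶠ k : ℤ, (1 - QQ⁻¹ * tt ^ (2 * k)) ^ (Ck l1 l3 k).num) =
      (-QQ) ^ (-((psize l1 : ℤ) + (psize l3 : ℤ))) * tt ^ (kappa l1 + kappa l3) *
        ∏ᶠ k : ℤ, (1 - QQ * tt ^ (2 * k)) ^ (Ck (pconj l1) (pconj l3) k).num := by
  classical
  have hL : (∏ᶠ k : ℤ, (1 - QQ⁻¹ * tt ^ (2 * k)) ^ (Ck l1 l3 k).num)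
      = ∏ s ∈ bigS l1 l3, (1 - QQ⁻¹ * tt ^ (2 * ee s)) ^ ww s := by
    rw [← finprod_eq (fun k => 1 - QQ⁻¹ * tt ^ (2 * k)) hg1 (bigS l1 l3) ee ww]
    refine finprod_congr fun k => ?_
    rw [Ck_num, DD]
  have hR : (∏ᶠ k : ℤ, (1 - QQ * tt ^ (2 * k)) ^ (Ck (pconj l1) (pconj l3) k).num)
      = ∏ s ∈ bigS (pconj l1) (pconj l3), (1 - QQ * tt ^ (2 * ee s)) ^ ww s := by
    rw [← finprod_eq (fun k => 1 - QQ * tt ^ (2 * k)) hg2 (bigS (pconj l1) (pconj l3)) ee ww]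
    refine finprod_congr fun k => ?_
    rw [Ck_num, DD]
  rw [hL, hR, conj_prod l1 l3 (fun e w => (1 - QQ * tt ^ (2 * e)) ^ w)]
  have e1 : -((psize l1 : ℤ) + (psize l3 : ℤ)) = ∑ s ∈ bigS l1 l3, -(ww s) := by
    rw [Finset.sum_neg_distrib, sum_ww]
  have e2 : kappa l1 + kappa l3 = ∑ s ∈ bigS l1 l3, 2 * ee s * ww s :=
    (sum_eeww l1 l3).symm
  rw [e1, e2, zpow_sum' (neg_ne_zero.mpr QQ_ne) _ (fun s => -(ww s)),
    zpow_sum' tt_ne _ (fun s => 2 * ee s * ww s),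
    ← Finset.prod_mul_distrib, ← Finset.prod_mul_distrib]
  exact Finset.prod_congr rfl fun s _ => flip (ee s) (ww s)
end
end
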